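/- arXiv:1508.03518 — 6 statements merged into one kernel-verified Lean document; each statement's English description precedes it below -/
import Mathlib

section
/- Let X be a smooth Banach space and Y = ker f a hyperplane in X with f of norm 1. Suppose P(x) = x - f(x)·w, with f(w) = 1, is a projection of norm 1 from X onto Y. Then f_y(w) = 0 for every nonzero y ∈ Y, where f_y denotes the unique norm-one supporting functional of y (i.e. ‖f_y‖ = 1 and f_y(y) = ‖y‖). -/
/-- If `X` is a smooth Banach space, `Y = ker f` a hyperplane with `‖f‖ = 1`, and
`P x = x - f x • w` (with `f w = 1`) is a projection of norm `1`, then the unique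
supporting functional `f_y` of every nonzero `y ∈ Y` satisfies `f_y w = 0`. -/
theorem supporting_functional_vanishes_of_norm_one_projection
    (X : Type*) [NormedAddCommGroup X] [NormedSpace ℝ X] [CompleteSpace X]
    (smooth : ∀ x : X, x ≠ 0 → ∃! g : X →L[ℝ] ℝ, ‖g‖ = 1 ∧ g x = ‖x‖)
    (f : X →L[ℝ] ℝ) (hf : ‖f‖ = 1) (w : X) (hw : f w = 1)
    (P : X →L[ℝ] X) (hP : ∀ x, P x = x - f x • w) (hPnorm : ‖P‖ = 1) :
    ∀ (y : X), y ≠ 0 → f y = 0 →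
      ∀ fy : X →L[ℝ] ℝ, ‖fy‖ = 1 → fy y = ‖y‖ → fy w = 0 := by
  intro y hy hfy fy hfy1 hfyy
  set g : X →L[ℝ] ℝ := fy.comp P with hg
  have hgy : g y = ‖y‖ := by
    simp [hg, hP, hfy, hfyy]
  have hgle : ‖g‖ ≤ 1 := by
    calc ‖g‖ ≤ ‖fy‖ * ‖P‖ := ContinuousLinearMap.opNorm_comp_le _ _
    _ = 1 := by rw [hfy1, hPnorm]; ring
  have hynorm : (0:ℝ) < ‖y‖ := norm_pos_iff.mpr hy
  have hgge : 1 ≤ ‖g‖ := by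
    have h3 := g.le_opNorm y
    rw [hgy, Real.norm_eq_abs, abs_of_nonneg hynorm.le] at h3
    nlinarith
  have hgnorm : ‖g‖ = 1 := le_antisymm hgle hgge
  obtain ⟨h, hh, huniq⟩ := smooth y hy
  have h1 : g = h := huniq g ⟨hgnorm, hgy⟩
  have h2 : fy = h := huniq fy ⟨hfy1, hfyy⟩
  have : g w = fy w := by rw [h1, h2]
  have hgw : g w = 0 := by simp [hg, hP, hw]
  linarith
end

section
/- Let X be a smooth Banach space and Y = ker f a hyperplane of X, where ‖f‖ = 1. Suppose P : X → Y is a projection with ‖P‖ ≤ 1 + r, of the form P(x) = x - f(x)·w with f(w) = 1 and r ≥ 0. If t₀ ∈ [0,2] satisfies δ_{X*}(t₀) ≥ r/(2+2r), where δ_{X*} is the modulus of convexity of the dual space X*, then |f_y(w)| ≤ t₀·(2 + r) for every nonzero y ∈ Y, where f_y is the unique supporting functional of y. -/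
/-- The modulus of convexity of a normed space `Z`. -/
noncomputable def modulusOfConvexity (Z : Type*) [NormedAddCommGroup Z] [NormedSpace ℝ Z] (t : ℝ) : ℝ :=
  sInf {d : ℝ | ∃ x y : Z, ‖x‖ ≤ 1 ∧ ‖y‖ ≤ 1 ∧ t ≤ ‖x - y‖ ∧ d = 1 - ‖(1 / 2 : ℝ) • (x + y)‖}

/-- Lemma 2.2 (Lemma `projekcja`): bound on `|f_y w|` for a projection of norm `≤ 1 + r`,
in terms of the modulus of convexity of the dual space. -/
theorem supporting_functional_bound_of_small_projection
    (X : Type*) [NormedAddCommGroup X] [NormedSpace ℝ X] [CompleteSpace X]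
    (smooth : ∀ x : X, x ≠ 0 → ∃! g : X →L[ℝ] ℝ, ‖g‖ = 1 ∧ g x = ‖x‖)
    (f : X →L[ℝ] ℝ) (hf : ‖f‖ = 1) (w : X) (hw : f w = 1) (r : ℝ) (hr : 0 ≤ r)
    (P : X →L[ℝ] X) (hP : ∀ x, P x = x - f x • w) (hPnorm : ‖P‖ ≤ 1 + r)
    (t₀ : ℝ) (ht₀ : t₀ ∈ Set.Icc (0 : ℝ) 2)
    (hδ : modulusOfConvexity (X →L[ℝ] ℝ) t₀ ≥ r / (2 + 2 * r)) :
    ∀ (y : X), y ≠ 0 → f y = 0 →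
      ∀ fy : X →L[ℝ] ℝ, ‖fy‖ = 1 → fy y = ‖y‖ → |fy w| ≤ t₀ * (2 + r) := by
  intro y hy hfy0 fy hfy1 hfyy
  have h1r : (0:ℝ) < 1 + r := by linarith
  have hyn : 0 < ‖y‖ := norm_pos_iff.mpr hy
  -- ‖w‖ ≤ 2 + r
  have hwle : ‖w‖ ≤ 2 + r := by
    have hid : ContinuousLinearMap.id ℝ X - P = f.smulRight w := by
      ext x
      simp [hP x]
    have h1 : ‖f.smulRight w‖ ≤ 2 + r := by
      rw [← hid]
      calc ‖ContinuousLinearMap.id ℝ X - P‖ ≤ ‖ContinuousLinearMap.id ℝ X‖ + ‖P‖ :=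
            norm_sub_le _ _
        _ ≤ 1 + (1 + r) := add_le_add ContinuousLinearMap.norm_id_le hPnorm
        _ = 2 + r := by ring
    rw [ContinuousLinearMap.norm_smulRight_apply, hf, one_mul] at h1
    exact h1
  -- the auxiliary functional g
  set g : X →L[ℝ] ℝ := (1 + r)⁻¹ • (fy.comp P) with hg
  have hPw : P w = 0 := by rw [hP w, hw, one_smul, sub_self]
  have hPy : P y = y := by rw [hP y, hfy0, zero_smul, sub_zero]
  have hgw : g w = 0 := by simp [hg, hPw]
  have hgy : g y = (1 + r)⁻¹ * ‖y‖ := by simp [hg, hPy, hfyy]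
  have hgnorm : ‖g‖ ≤ 1 := by
    have h2 : ‖fy.comp P‖ ≤ 1 * (1 + r) := by
      calc ‖fy.comp P‖ ≤ ‖fy‖ * ‖P‖ := ContinuousLinearMap.opNorm_comp_le _ _
        _ ≤ 1 * (1 + r) := by rw [hfy1]; exact mul_le_mul_of_nonneg_left hPnorm zero_le_one
    have hns : ‖(1 + r)⁻¹ • (fy.comp P)‖ = ‖(1 + r)⁻¹‖ * ‖fy.comp P‖ := norm_smul ((1 + r)⁻¹) (fy.comp P)
    rw [hg, hns, Real.norm_eq_abs, abs_of_pos (inv_pos.mpr h1r)]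
    rw [one_mul] at h2
    calc (1 + r)⁻¹ * ‖fy.comp P‖ ≤ (1 + r)⁻¹ * (1 + r) :=
          mul_le_mul_of_nonneg_left h2 (inv_pos.mpr h1r).le
      _ = 1 := inv_mul_cancel₀ h1r.ne'
  by_cases hcase : ‖fy - g‖ ≤ t₀
  · -- easy case
    have hfw : fy w = (fy - g) w := by simp [hgw]
    rw [hfw, ← Real.norm_eq_abs]
    calc ‖(fy - g) w‖ ≤ ‖fy - g‖ * ‖w‖ := (fy - g).le_opNorm w
      _ ≤ t₀ * (2 + r) := mul_le_mul hcase hwle (norm_nonneg w) ht₀.1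
  · -- hard case: the midpoint has maximal possible norm, use smoothness
    push_neg at hcase
    set m : X →L[ℝ] ℝ := (1 / 2 : ℝ) • (fy + g) with hm
    set c : ℝ := (2 + r) / (2 + 2 * r) with hc
    have h22r : (0:ℝ) < 2 + 2 * r := by linarith
    have hcpos : 0 < c := div_pos (by linarith) h22r
    have hchalf : (1/2 : ℝ) < c := by
      rw [hc, div_lt_div_iff₀ (by norm_num) h22r] at *
      linarith
    -- δ(t₀) ≤ 1 - ‖m‖
    have hbdd : BddBelow {d : ℝ | ∃ x y : X →L[ℝ] ℝ, ‖x‖ ≤ 1 ∧ ‖y‖ ≤ 1 ∧ t₀ ≤ ‖x - y‖ ∧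
        d = 1 - ‖(1 / 2 : ℝ) • (x + y)‖} := by
      refine ⟨0, ?_⟩
      rintro d ⟨a, b, ha, hb, _, rfl⟩
      have : ‖(1 / 2 : ℝ) • (a + b)‖ ≤ 1 := by
        have hns : ‖(1 / 2 : ℝ) • (a + b)‖ = ‖(1/2 : ℝ)‖ * ‖a + b‖ := norm_smul ((1/2 : ℝ)) (a + b)
        rw [hns, Real.norm_eq_abs]
        calc |(1/2 : ℝ)| * ‖a + b‖ ≤ (1/2 : ℝ) * (‖a‖ + ‖b‖) := by
              rw [abs_of_pos (by norm_num : (0:ℝ) < 1/2)]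
              exact mul_le_mul_of_nonneg_left (norm_add_le a b) (by norm_num)
          _ ≤ 1 := by linarith
      linarith
    have hδle : modulusOfConvexity (X →L[ℝ] ℝ) t₀ ≤ 1 - ‖m‖ :=
      csInf_le hbdd ⟨fy, g, hfy1.le, hgnorm, hcase.le, rfl⟩
    have hmle : ‖m‖ ≤ c := by
      have h3 : r / (2 + 2 * r) ≤ 1 - ‖m‖ := le_trans hδ hδle
      have h4 : (1:ℝ) - r / (2 + 2 * r) = c := by
        rw [hc]; field_simp; ring
      linarith [h4 ▸ (by linarith : ‖m‖ ≤ 1 - r / (2 + 2 * r))]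
    have hmy : m y = ‖y‖ * c := by
      have e1 : m y = (1/2 : ℝ) * (fy y + g y) := by
        simp only [hm, ContinuousLinearMap.smul_apply, ContinuousLinearMap.add_apply,
          smul_eq_mul]
      rw [e1, hfyy, hgy, hc]
      field_simp
      ring
    have hmge : c ≤ ‖m‖ := by
      have h5 : ‖y‖ * c ≤ ‖m‖ * ‖y‖ := by
        calc ‖y‖ * c = |m y| := by rw [hmy, abs_of_nonneg (by positivity)]
          _ = ‖m y‖ := (Real.norm_eq_abs _).symm
          _ ≤ ‖m‖ * ‖y‖ := m.le_opNorm y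
      have := (mul_le_mul_iff_of_pos_right hyn).mp (by linarith [h5] : c * ‖y‖ ≤ ‖m‖ * ‖y‖)
      exact this
    have hmeq : ‖m‖ = c := le_antisymm hmle hmge
    -- normalized midpoint supports y, so equals fy by smoothness
    set m2 : X →L[ℝ] ℝ := c⁻¹ • m with hm2
    have hm2norm : ‖m2‖ = 1 := by
      have hns : ‖c⁻¹ • m‖ = ‖c⁻¹‖ * ‖m‖ := norm_smul c⁻¹ m
      rw [hm2, hns, Real.norm_eq_abs, abs_of_pos (inv_pos.mpr hcpos), hmeq,
        inv_mul_cancel₀ hcpos.ne']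
    have hm2y : m2 y = ‖y‖ := by
      have e2 : m2 y = c⁻¹ * m y := by
        simp only [hm2, ContinuousLinearMap.smul_apply, smul_eq_mul]
      rw [e2, hmy, mul_comm (‖y‖) c, ← mul_assoc, inv_mul_cancel₀ hcpos.ne', one_mul]
    obtain ⟨gu, _, huniq⟩ := smooth y hy
    have h1 : fy = gu := huniq fy ⟨hfy1, hfyy⟩
    have h2 : m2 = gu := huniq m2 ⟨hm2norm, hm2y⟩
    have hm2fy : m2 = fy := h2.trans h1.symm
    have hmfy : m = c • fy := by
      have h6 : c • m2 = c • fy := by rw [hm2fy]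
      rwa [hm2, smul_smul, mul_inv_cancel₀ hcpos.ne', one_smul] at h6
    -- evaluate at w
    have h7 : (1/2 : ℝ) * fy w = c * fy w := by
      have h8 : m w = (c • fy) w := by rw [hmfy]
      simp only [hm, ContinuousLinearMap.smul_apply, ContinuousLinearMap.add_apply,
        smul_eq_mul] at h8
      rw [hgw] at h8
      linarith
    have hfw : fy w = 0 := by
      have h0 : (c - 1/2) * fy w = 0 := by rw [sub_mul]; linarith
      rcases mul_eq_zero.mp h0 with h | h
      · exact absurd h (sub_ne_zero.mpr hchalf.ne')
      · exact h
    rw [hfw, abs_zero]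
    exact mul_nonneg ht₀.1 (by linarith)
end

section
/- Let ‖·‖ be the Euclidean norm on ℝ^n (n ≥ 2) and let f₁, …, f_m be linear functionals on ℝ^n, each of Euclidean dual norm 1. Then there exists y ∈ ℝ^n with ‖y‖₂ = 1 such that |f_i(y)| ≥ 1/((n-1)·m) for every i = 1, …, m. -/
/-- Euclidean case of Lemma 3.2: given `m` norm-one functionals on Euclidean `ℝⁿ`,
there is a unit vector on which all of them are at least `1/((n-1)m)` in absolute value. -/
theorem exists_unit_vector_functionals_large_euclidean
    (n m : ℕ) (hn : 2 ≤ n)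
    (f : Fin m → (EuclideanSpace ℝ (Fin n) →L[ℝ] ℝ))
    (hf : ∀ i, ‖f i‖ = 1) :
    ∃ y : EuclideanSpace ℝ (Fin n), ‖y‖ = 1 ∧
      ∀ i, |f i y| ≥ 1 / (((n : ℝ) - 1) * m) := by
  rcases Nat.eq_zero_or_pos m with hm | hm
  · subst hm
    refine ⟨EuclideanSpace.single ⟨0, by omega⟩ 1, ?_, fun i => i.elim0⟩
    simp [EuclideanSpace.norm_single]
  · set E := EuclideanSpace ℝ (Fin n) with hE
    let v : Fin m → E := fun i => (InnerProductSpace.toDual ℝ E).symm (f i)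
    have hv : ∀ i, ‖v i‖ = 1 := fun i => by
      simpa [v] using ((InnerProductSpace.toDual ℝ E).symm.norm_map (f i)).trans (hf i)
    have hfv : ∀ i (x : E), f i x = inner ℝ (v i) x := fun i x => by
      simp [v, InnerProductSpace.toDual_symm_apply]
    let sgn : Bool → ℝ := fun b => if b then 1 else -1
    have hsgn : ∀ b, |sgn b| = 1 := by intro b; cases b <;> simp [sgn]
    let S : (Fin m → Bool) → E := fun b => ∑ i, sgn (b i) • v i
    obtain ⟨b, hb⟩ := Finite.exists_max (fun b => ‖S b‖)
    set s : E := S b with hs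
    -- key: |⟪s, v j⟫| ≥ 1 for all j
    have key : ∀ j, 1 ≤ |(inner ℝ s (v j) : ℝ)| := by
      intro j
      have hdiff : S (Function.update b j (!b j)) = s - (2 * sgn (b j)) • v j := by
        have : S (Function.update b j (!b j)) - s
            = ∑ i, (sgn (Function.update b j (!b j) i) - sgn (b i)) • v i := by
          simp [S, hs, ← Finset.sum_sub_distrib, sub_smul]; rw [Finset.sum_sub_distrib]
        have hsum : ∑ i, (sgn (Function.update b j (!b j) i) - sgn (b i)) • v i
            = (-(2 * sgn (b j))) • v j := by
          rw [Finset.sum_eq_single j]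
          · cases hbj : b j <;> simp [Function.update_self, hbj, sgn] <;> module
          · intro i _ hij
            simp [Function.update_of_ne hij]
          · simp
        have h4 := sub_eq_iff_eq_add.mp this
        rw [h4, hsum]
        module
      have hle : ‖S (Function.update b j (!b j))‖ ≤ ‖s‖ := hb _
      have hsq : ‖s - (2 * sgn (b j)) • v j‖ ^ 2 ≤ ‖s‖ ^ 2 := by
        rw [← hdiff]
        exact pow_le_pow_left₀ (norm_nonneg _) hle 2
      rw [norm_sub_sq_real] at hsq
      rw [real_inner_smul_right, norm_smul] at hsq
      have h1 : ‖(2 * sgn (b j) : ℝ)‖ = 2 := by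
        rw [Real.norm_eq_abs, abs_mul, hsgn]; norm_num
      rw [h1, hv j] at hsq
      have h2 : 1 ≤ sgn (b j) * (inner ℝ s (v j) : ℝ) := by nlinarith
      calc (1 : ℝ) ≤ sgn (b j) * inner ℝ s (v j) := h2
        _ ≤ |sgn (b j) * (inner ℝ s (v j) : ℝ)| := le_abs_self _
        _ = |(inner ℝ s (v j) : ℝ)| := by rw [abs_mul, hsgn, one_mul]
    have hm1 : (1 : ℝ) ≤ m := by exact_mod_cast hm
    have hsnorm : ‖s‖ ≤ m := by
      calc ‖s‖ ≤ ∑ i : Fin m, ‖sgn (b i) • v i‖ := norm_sum_le _ _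
        _ = ∑ i : Fin m, 1 := by
            refine Finset.sum_congr rfl fun i _ => ?_
            rw [norm_smul, hv i, Real.norm_eq_abs, hsgn, mul_one]
        _ = m := by simp
    have hspos : 0 < ‖s‖ := by
      have := key ⟨0, hm⟩
      have h3 : |(inner ℝ s (v ⟨0, hm⟩) : ℝ)| ≤ ‖s‖ * ‖v ⟨0, hm⟩‖ :=
        abs_real_inner_le_norm _ _
      rw [hv, mul_one] at h3
      linarith
    refine ⟨‖s‖⁻¹ • s, ?_, ?_⟩
    · rw [norm_smul, Real.norm_eq_abs, abs_inv, abs_of_pos hspos,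
        inv_mul_cancel₀ hspos.ne']
    · intro i
      have : f i (‖s‖⁻¹ • s) = ‖s‖⁻¹ * inner ℝ (v i) s := by
        rw [hfv, real_inner_smul_right]
      rw [this, abs_mul, abs_inv, abs_of_pos hspos, real_inner_comm]
      have hge : 1 / ‖s‖ ≤ ‖s‖⁻¹ * |(inner ℝ s (v i) : ℝ)| := by
        rw [one_div]
        exact le_mul_of_one_le_right (by positivity) (key i)
      have hbound : 1 / (((n : ℝ) - 1) * m) ≤ 1 / ‖s‖ := by
        apply one_div_le_one_div_of_le hspos
        have hn1 : (1 : ℝ) ≤ (n : ℝ) - 1 := by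
          have : (2 : ℝ) ≤ n := by exact_mod_cast hn
          linarith
        calc ‖s‖ ≤ m := hsnorm
          _ = 1 * m := (one_mul _).symm
          _ ≤ ((n : ℝ) - 1) * m := by
              apply mul_le_mul_of_nonneg_right hn1; positivity
      linarith
end

section
/- Let ‖·‖ be an arbitrary norm on ℝ^n (n ≥ 2) and let f₁, …, f_m be nonzero linear functionals on ℝ^n. Then there exists y ∈ ℝ^n with ‖y‖ = 1 such that |f_i(y)| ≥ ‖f_i‖ / (√n·(n-1)·m) for every i = 1, …, m, where ‖f_i‖ is the dual norm of f_i with respect to ‖·‖. -/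
open Finset RealInnerProductSpace Real Module



lemma signLemma {F : Type*} [NormedAddCommGroup F] [InnerProductSpace ℝ F]
    (m : ℕ) (v : Fin m → F) (hv : ∀ i, ‖v i‖ = 1) :
    ∃ s : F, ‖s‖ ≤ m ∧ ∀ i, 1 ≤ |⟪v i, s⟫| := by
  classical
  set sgn : Bool → ℝ := fun b => if b then 1 else -1 with hsgn
  have hsgnabs : ∀ b, |sgn b| = 1 := by intro b; cases b <;> simp [hsgn]
  set S : (Fin m → Bool) → F := fun ε => ∑ j, sgn (ε j) • v j with hS
  obtain ⟨ε, hε⟩ := Finset.exists_max_image (Finset.univ : Finset (Fin m → Bool))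
    (fun ε => ‖S ε‖) ⟨fun _ => true, Finset.mem_univ _⟩
  obtain ⟨_, hmax⟩ := hε
  refine ⟨S ε, ?_, ?_⟩
  · calc ‖S ε‖ ≤ ∑ j, ‖sgn (ε j) • v j‖ := norm_sum_le _ _
    _ = ∑ j : Fin m, 1 := by
        refine Finset.sum_congr rfl fun j _ => ?_
        rw [norm_smul, Real.norm_eq_abs, hsgnabs, hv, one_mul]
    _ = m := by simp
  · intro i
    set ε' : Fin m → Bool := Function.update ε i (!ε i) with hε'
    have hflip : S ε' = S ε - (2 * sgn (ε i)) • v i := by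
      have : S ε - S ε' = ∑ j, (sgn (ε j) - sgn (ε' j)) • v j := by
        rw [hS]
        simp only [← Finset.sum_sub_distrib, sub_smul]
      have h2 : ∑ j, (sgn (ε j) - sgn (ε' j)) • v j = (2 * sgn (ε i)) • v i := by
        rw [Finset.sum_eq_single i]
        · congr 1
          rw [hε', Function.update_self]
          cases h : ε i <;> simp [hsgn, h] <;> ring
        · intro j _ hj
          rw [hε', Function.update_of_ne hj, sub_self, zero_smul]
        · intro h; exact absurd (Finset.mem_univ i) h
      rw [h2, sub_eq_iff_eq_add] at this
      rw [this]; abel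
    have hle : ‖S ε'‖ ≤ ‖S ε‖ := hmax ε' (Finset.mem_univ _)
    have hsq : ‖S ε'‖ ^ 2 ≤ ‖S ε‖ ^ 2 := by
      exact pow_le_pow_left₀ (norm_nonneg _) hle 2
    rw [hflip, norm_sub_sq_real] at hsq
    have hinner : 1 ≤ sgn (ε i) * ⟪S ε, v i⟫ := by
      have hvi : ‖(2 * sgn (ε i)) • v i‖ ^ 2 = 4 := by
        rw [norm_smul, Real.norm_eq_abs, abs_mul, hsgnabs, hv, mul_pow]
        norm_num
      rw [real_inner_smul_right] at hsq
      nlinarith [hsq, hvi]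
    have := le_abs_self (sgn (ε i) * ⟪S ε, v i⟫)
    rw [abs_mul, hsgnabs, one_mul] at this
    rw [real_inner_comm]
    linarith

lemma exists_unit_vec {X : Type*} [NormedAddCommGroup X] [NormedSpace ℝ X]
    [FiniteDimensional ℝ X] (h : 0 < Module.finrank ℝ X) :
    ∃ x : X, ‖x‖ = 1 := by
  have : Nontrivial X := Module.nontrivial_of_finrank_pos h
  obtain ⟨x, hx⟩ := exists_ne (0 : X)
  refine ⟨‖x‖⁻¹ • x, ?_⟩
  rw [norm_smul, norm_inv, norm_norm, inv_mul_cancel₀ (norm_ne_zero_iff.mpr hx)]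

lemma exists_norm_attain {X : Type*} [NormedAddCommGroup X] [NormedSpace ℝ X]
    [FiniteDimensional ℝ X] (h : 0 < Module.finrank ℝ X) (f : X →L[ℝ] ℝ) :
    ∃ x : X, ‖x‖ = 1 ∧ |f x| = ‖f‖ := by
  have : Nontrivial X := Module.nontrivial_of_finrank_pos h
  have hne : (Metric.sphere (0:X) 1).Nonempty := NormedSpace.sphere_nonempty.mpr zero_le_one
  obtain ⟨x, hxS, hmax⟩ := (isCompact_sphere (0:X) 1).exists_isMaxOn hne
    (continuous_abs.comp f.continuous).continuousOn
  have hx1 : ‖x‖ = 1 := by simpa using hxS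
  refine ⟨x, hx1, le_antisymm ?_ ?_⟩
  · calc |f x| ≤ ‖f‖ * ‖x‖ := f.le_opNorm x
    _ = ‖f‖ := by rw [hx1, mul_one]
  · refine f.opNorm_le_bound (abs_nonneg _) fun y => ?_
    rcases eq_or_ne y 0 with rfl | hy
    · simp
    · have hyS : ‖y‖⁻¹ • y ∈ Metric.sphere (0:X) 1 := by
        simp [norm_smul, inv_mul_cancel₀ (norm_ne_zero_iff.mpr hy)]
      have this : |f (‖y‖⁻¹ • y)| ≤ |f x| := hmax hyS
      rw [ContinuousLinearMap.map_smul, smul_eq_mul, abs_mul, abs_inv, abs_norm] at this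
      have hypos : (0:ℝ) < ‖y‖ := norm_pos_iff.mpr hy
      calc |f y| = ‖y‖ * (‖y‖⁻¹ * |f y|) := by field_simp
      _ ≤ ‖y‖ * |f x| := by
          refine mul_le_mul_of_nonneg_left ?_ hypos.le
          exact this
      _ = |f x| * ‖y‖ := mul_comm _ _



/-- Auerbach-type system: unit-ball vectors `e` with coordinate functionals `c` of norm ≤ 1. -/
lemma auerbach (n : ℕ) (hn : 0 < n) (X : Type*) [NormedAddCommGroup X] [NormedSpace ℝ X]
    [FiniteDimensional ℝ X] (hdim : Module.finrank ℝ X = n) :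
    ∃ (e : Fin n → X) (c : Fin n → X →ₗ[ℝ] ℝ),
      (∀ i, ‖e i‖ ≤ 1) ∧ (∀ i x, |c i x| ≤ ‖x‖) ∧
      (∀ i j, c i (e j) = if i = j then 1 else 0) ∧
      (∀ x : X, ∑ j, c j x • e j = x) := by
  classical
  set b : Basis (Fin n) ℝ X := Module.finBasisOfFinrankEq ℝ X hdim with hb
  set D : (Fin n → X) → ℝ := fun v => b.det v with hD
  have hDcont : Continuous D := by
    have h1 : Continuous fun v : Fin n → X => Matrix.det (fun i j => b.repr (v j) i) := by
      refine Continuous.matrix_det ?_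
      refine continuous_pi fun i => continuous_pi fun j => ?_
      exact ((b.coord i).continuous_of_finiteDimensional).comp (continuous_apply j)
    have h2 : D = fun v : Fin n → X => Matrix.det (fun i j => b.repr (v j) i) := by
      funext v
      show b.det v = _
      rw [Basis.det_apply]
      rfl
    rw [h2]; exact h1
  set K : Set (Fin n → X) := Set.univ.pi (fun _ => Metric.closedBall (0:X) 1) with hK
  have hKc : IsCompact K := isCompact_univ_pi fun _ => isCompact_closedBall _ _
  set v0 : Fin n → X := fun i => ‖b i‖⁻¹ • b i with hv0
  have hbine : ∀ i, ‖b i‖ ≠ 0 := fun i => norm_ne_zero_iff.mpr (b.ne_zero i)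
  have hv0K : v0 ∈ K := by
    intro i _
    simp only [hv0, Metric.mem_closedBall, dist_zero_right, norm_smul, norm_inv, norm_norm]
    rw [inv_mul_cancel₀ (hbine i)]
  have hDv0 : D v0 ≠ 0 := by
    have h1 : D v0 = (∏ i, ‖b i‖⁻¹) * b.det b := by
      rw [hD, hv0]
      show b.det (fun i => ‖b i‖⁻¹ • b i) = _
      have := (b.det).toMultilinearMap.map_smul_univ (fun i => ‖b i‖⁻¹) (fun i => b i)
      simpa [smul_eq_mul] using this
    rw [h1, Basis.det_self, mul_one]
    exact Finset.prod_ne_zero_iff.mpr fun i _ => inv_ne_zero (hbine i)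
  obtain ⟨e, heK, hemax⟩ := hKc.exists_isMaxOn ⟨v0, hv0K⟩ (continuous_abs.comp hDcont).continuousOn
  have hmax : ∀ v ∈ K, |D v| ≤ |D e| := fun v hv => hemax hv
  have hDe : D e ≠ 0 := by
    intro h
    have := hmax v0 hv0K
    rw [h, abs_zero] at this
    exact hDv0 (abs_eq_zero.mp (le_antisymm this (abs_nonneg _)))
  have heK' : ∀ i, ‖e i‖ ≤ 1 := by
    intro i
    have := heK i (Set.mem_univ i)
    simpa [Metric.mem_closedBall, dist_zero_right] using this
  set c : Fin n → X →ₗ[ℝ] ℝ := fun i =>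
    { toFun := fun x => (D e)⁻¹ * D (Function.update e i x)
      map_add' := fun x y => by
        show (D e)⁻¹ * (b.det (Function.update e i (x + y))) = _
        rw [b.det.map_update_add]
        ring
      map_smul' := fun r x => by
        show (D e)⁻¹ * (b.det (Function.update e i (r • x))) = _
        rw [b.det.map_update_smul]
        simp [smul_eq_mul]
        ring } with hc
  have hdelta : ∀ i j, c i (e j) = if i = j then 1 else 0 := by
    intro i j
    show (D e)⁻¹ * D (Function.update e i (e j)) = _
    rcases eq_or_ne i j with rfl | hij
    · rw [Function.update_eq_self, if_pos rfl, inv_mul_cancel₀ hDe]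
    · rw [if_neg hij]
      have hzero : b.det (Function.update e i (e j)) = 0 := by
        refine b.det.map_eq_zero_of_eq _ ?_ hij
        rw [Function.update_self, Function.update_of_ne (Ne.symm hij)]
      show (D e)⁻¹ * (b.det (Function.update e i (e j))) = 0
      rw [hzero, mul_zero]
  have hcnorm : ∀ i x, |c i x| ≤ ‖x‖ := by
    intro i x
    rcases eq_or_ne x 0 with rfl | hx
    · simp
    · have hxn : ‖x‖ ≠ 0 := norm_ne_zero_iff.mpr hx
      have hunit : |c i (‖x‖⁻¹ • x)| ≤ 1 := by
        have hmem : Function.update e i (‖x‖⁻¹ • x) ∈ K := by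
          intro j _
          simp only [Metric.mem_closedBall, dist_zero_right]
          rcases eq_or_ne j i with rfl | hj
          · rw [Function.update_self, norm_smul, norm_inv, norm_norm,
              inv_mul_cancel₀ hxn]
          · rw [Function.update_of_ne hj]
            exact heK' j
        have := hmax _ hmem
        show |(D e)⁻¹ * D (Function.update e i (‖x‖⁻¹ • x))| ≤ 1
        rw [abs_mul, abs_inv]
        rw [inv_mul_le_iff₀ (abs_pos.mpr hDe)]
        simpa using this
      have hsmul : c i x = ‖x‖ * c i (‖x‖⁻¹ • x) := by
        rw [map_smul, smul_eq_mul, ← mul_assoc, mul_inv_cancel₀ hxn, one_mul]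
      rw [hsmul, abs_mul, abs_norm]
      calc ‖x‖ * |c i (‖x‖⁻¹ • x)| ≤ ‖x‖ * 1 :=
        mul_le_mul_of_nonneg_left hunit (norm_nonneg x)
      _ = ‖x‖ := mul_one _
  have hli : LinearIndependent ℝ e := by
    rw [linearIndependent_iff']
    intro s g hsum i hi
    have := congrArg (c i) hsum
    rw [map_sum, map_zero] at this
    rw [← this]
    symm
    rw [Finset.sum_eq_single i]
    · rw [map_smul, smul_eq_mul, hdelta, if_pos rfl, mul_one]
    · intro j _ hj
      rw [map_smul, smul_eq_mul, hdelta, if_neg (Ne.symm hj), mul_zero]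
    · intro h; exact absurd hi h
  have hcard : Fintype.card (Fin n) = Module.finrank ℝ X := by simp [hdim]
  have hne : Nonempty (Fin n) := ⟨⟨0, hn⟩⟩
  set e' : Basis (Fin n) ℝ X := basisOfLinearIndependentOfCardEqFinrank hli hcard with he'
  have he'e : ∀ i, e' i = e i := fun i => by
    rw [he', coe_basisOfLinearIndependentOfCardEqFinrank]
  have hrecon : ∀ x : X, ∑ j, c j x • e j = x := by
    have hmapeq : (∑ j, (LinearMap.smulRight (c j) (e j))) = (LinearMap.id : X →ₗ[ℝ] X) := by
      refine e'.ext fun k => ?_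
      rw [LinearMap.sum_apply, LinearMap.id_apply, he'e]
      rw [Finset.sum_eq_single k]
      · rw [LinearMap.smulRight_apply, hdelta, if_pos rfl, one_smul]
      · intro j _ hj
        rw [LinearMap.smulRight_apply, hdelta, if_neg hj, zero_smul]
      · intro h; exact absurd (Finset.mem_univ k) h
    intro x
    have := congrArg (fun φ : X →ₗ[ℝ] X => φ x) hmapeq
    simpa [LinearMap.sum_apply] using this
  exact ⟨e, c, heK', hcnorm, hdelta, hrecon⟩
lemma reduction (n m : ℕ) (hn : 0 < n)
    (X : Type*) [NormedAddCommGroup X] [NormedSpace ℝ X] [FiniteDimensional ℝ X]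
    (hdim : Module.finrank ℝ X = n)
    (f : Fin m → (X →L[ℝ] ℝ)) (hf : ∀ i, f i ≠ 0) (g : ℝ) (hg : 0 < g)
    (H : ∀ v : Fin m → EuclideanSpace ℝ (Fin n), (∀ i, ‖v i‖ = 1) →
      ∃ yV : EuclideanSpace ℝ (Fin n), ‖yV‖ = 1 ∧ ∀ i, g ≤ |⟪v i, yV⟫|) :
    ∃ y : X, ‖y‖ = 1 ∧ ∀ i, ‖f i‖ * g / n ≤ |f i y| := by
  classical
  obtain ⟨e, c, he1, hc, hdelta, hrecon⟩ := auerbach n hn X hdim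
  have hnpos : (0:ℝ) < n := by exact_mod_cast hn
  have hsq : (0:ℝ) < Real.sqrt n := Real.sqrt_pos.mpr hnpos
  set lx : X → EuclideanSpace ℝ (Fin n) :=
    fun x => (WithLp.equiv 2 (Fin n → ℝ)).symm (fun j => c j x) with hlxdef
  have hlx : ∀ (x : X) (j : Fin n), lx x j = c j x := fun x j => rfl
  have hnorm_eq : ∀ x : X, ‖lx x‖ = Real.sqrt (∑ j, (c j x)^2) := by
    intro x
    rw [EuclideanSpace.norm_eq]
    congr 1
    refine Finset.sum_congr rfl fun j _ => ?_
    rw [hlx, Real.norm_eq_abs, sq_abs]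
  have hE1 : ∀ x : X, ‖lx x‖ ≤ Real.sqrt n * ‖x‖ := by
    intro x
    rw [hnorm_eq]
    have hsum : (∑ j, (c j x)^2) ≤ n * ‖x‖^2 := by
      calc ∑ j, (c j x)^2 ≤ ∑ _j : Fin n, ‖x‖^2 := by
            refine Finset.sum_le_sum fun j _ => ?_
            rw [← sq_abs]
            exact pow_le_pow_left₀ (abs_nonneg _) (hc j x) 2
      _ = n * ‖x‖^2 := by simp [mul_comm]
    calc Real.sqrt (∑ j, (c j x)^2) ≤ Real.sqrt (n * ‖x‖^2) := Real.sqrt_le_sqrt hsum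
    _ = Real.sqrt n * ‖x‖ := by
        rw [Real.sqrt_mul hnpos.le, Real.sqrt_sq (norm_nonneg _)]
  have hE2 : ∀ x : X, ‖x‖ ≤ Real.sqrt n * ‖lx x‖ := by
    intro x
    have h1 : ‖x‖ ≤ ∑ j, |c j x| := by
      conv_lhs => rw [← hrecon x]
      calc ‖∑ j, c j x • e j‖ ≤ ∑ j, ‖c j x • e j‖ := norm_sum_le _ _
      _ ≤ ∑ j, |c j x| := by
          refine Finset.sum_le_sum fun j _ => ?_
          rw [norm_smul, Real.norm_eq_abs]
          calc |c j x| * ‖e j‖ ≤ |c j x| * 1 :=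
            mul_le_mul_of_nonneg_left (he1 j) (abs_nonneg _)
          _ = |c j x| := mul_one _
    have h2 : (∑ j, |c j x|) ≤ Real.sqrt n * ‖lx x‖ := by
      rw [hnorm_eq, ← Real.sqrt_mul hnpos.le]
      rw [← Real.sqrt_sq (Finset.sum_nonneg fun j _ => abs_nonneg (c j x))]
      refine Real.sqrt_le_sqrt ?_
      have := sq_sum_le_card_mul_sum_sq (s := (Finset.univ : Finset (Fin n)))
        (f := fun j => |c j x|)
      simpa [sq_abs] using this
    linarith
  set u : Fin m → EuclideanSpace ℝ (Fin n) :=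
    fun i => (WithLp.equiv 2 (Fin n → ℝ)).symm (fun j => f i (e j)) with hudef
  have hu : ∀ i j, u i j = f i (e j) := fun i j => rfl
  have hfi : ∀ (i : Fin m) (x : X), f i x = ⟪u i, lx x⟫ := by
    intro i x
    rw [PiLp.inner_apply]
    simp only [RCLike.inner_apply, conj_trivial, hu, hlx]
    conv_lhs => rw [← hrecon x]
    rw [map_sum]
    refine Finset.sum_congr rfl fun j _ => ?_
    rw [map_smul, smul_eq_mul, mul_comm]
  have hune : ∀ i, u i ≠ 0 := by
    intro i h
    refine hf i (ContinuousLinearMap.ext fun x => ?_)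
    rw [hfi i x, h, inner_zero_left]; rfl
  have hunorm : ∀ i, ‖f i‖ ≤ Real.sqrt n * ‖u i‖ := by
    intro i
    refine (f i).opNorm_le_bound (by positivity) fun x => ?_
    rw [Real.norm_eq_abs, hfi i x]
    calc |⟪u i, lx x⟫| ≤ ‖u i‖ * ‖lx x‖ := abs_real_inner_le_norm _ _
    _ ≤ ‖u i‖ * (Real.sqrt n * ‖x‖) := mul_le_mul_of_nonneg_left (hE1 x) (norm_nonneg _)
    _ = Real.sqrt n * ‖u i‖ * ‖x‖ := by ring
  obtain ⟨yV, hyV1, hyVg⟩ := H (fun i => ‖u i‖⁻¹ • u i) (fun i => by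
    rw [norm_smul, norm_inv, norm_norm, inv_mul_cancel₀ (norm_ne_zero_iff.mpr (hune i))])
  set z : X := ∑ j, yV j • e j with hzdef
  have hcz : ∀ k, c k z = yV k := by
    intro k
    rw [hzdef, map_sum]
    rw [Finset.sum_eq_single k]
    · rw [map_smul, smul_eq_mul, hdelta, if_pos rfl, mul_one]
    · intro j _ hj
      rw [map_smul, smul_eq_mul, hdelta, if_neg (Ne.symm hj), mul_zero]
    · intro h; exact absurd (Finset.mem_univ k) h
  have hlxz : lx z = yV := by
    refine (WithLp.equiv 2 (Fin n → ℝ)).symm_apply_eq.mpr ?_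
    funext j
    exact (hcz j).symm ▸ rfl
  have hzne : z ≠ 0 := by
    intro h
    rw [h] at hlxz
    have : ‖lx (0:X)‖ = 0 := by
      rw [hnorm_eq]
      simp
    rw [hlxz, hyV1] at this
    exact one_ne_zero this
  have hznorm : ‖z‖ ≤ Real.sqrt n := by
    calc ‖z‖ ≤ Real.sqrt n * ‖lx z‖ := hE2 z
    _ = Real.sqrt n := by rw [hlxz, hyV1, mul_one]
  have hzpos : (0:ℝ) < ‖z‖ := norm_pos_iff.mpr hzne
  refine ⟨‖z‖⁻¹ • z, ?_, ?_⟩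
  · rw [norm_smul, norm_inv, norm_norm, inv_mul_cancel₀ hzpos.ne']
  · intro i
    have hinner : g * ‖u i‖ ≤ |f i z| := by
      have := hyVg i
      rw [real_inner_smul_left, abs_mul, abs_inv, abs_norm] at this
      rw [hfi i z, hlxz]
      have hupos : (0:ℝ) < ‖u i‖ := norm_pos_iff.mpr (hune i)
      calc g * ‖u i‖ ≤ (‖u i‖⁻¹ * |⟪u i, yV⟫|) * ‖u i‖ :=
        mul_le_mul_of_nonneg_right this hupos.le
      _ = |⟪u i, yV⟫| := by field_simp
    have hval : |f i (‖z‖⁻¹ • z)| = ‖z‖⁻¹ * |f i z| := by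
      rw [ContinuousLinearMap.map_smul, smul_eq_mul, abs_mul, abs_inv, abs_norm]
    rw [hval]
    have hui : ‖f i‖ / Real.sqrt n ≤ ‖u i‖ := by
      rw [div_le_iff₀ hsq]
      calc ‖f i‖ ≤ Real.sqrt n * ‖u i‖ := hunorm i
      _ = ‖u i‖ * Real.sqrt n := mul_comm _ _
    have hinv : (Real.sqrt n)⁻¹ ≤ ‖z‖⁻¹ := by
      exact inv_anti₀ hzpos hznorm
    have hfz : 0 ≤ |f i z| := abs_nonneg _
    calc ‖f i‖ * g / n = (Real.sqrt n)⁻¹ * (g * (‖f i‖ / Real.sqrt n)) := by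
          rw [← Real.mul_self_sqrt hnpos.le]
          field_simp
          simp only [Real.sqrt_mul_self (Real.sqrt_nonneg _), Real.sqrt_sq (Real.sqrt_nonneg _)]
    _ ≤ (Real.sqrt n)⁻¹ * (g * ‖u i‖) := by
        refine mul_le_mul_of_nonneg_left ?_ (by positivity)
        exact mul_le_mul_of_nonneg_left hui hg.le
    _ ≤ ‖z‖⁻¹ * (g * ‖u i‖) := by
        refine mul_le_mul_of_nonneg_right hinv (by positivity)
    _ ≤ ‖z‖⁻¹ * |f i z| := mul_le_mul_of_nonneg_left hinner (by positivity)



lemma sin_ge_of_mem {x δ : ℝ} (hδ : 0 < δ) (hδ2 : δ ≤ π/2) (h1 : δ ≤ x) (h2 : x ≤ π - δ) :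
    Real.sin δ ≤ Real.sin x := by
  have hmono := Real.strictMonoOn_sin.monotoneOn
  rcases le_total x (π/2) with h | h
  · exact hmono ⟨by linarith, hδ2⟩ ⟨by linarith, h⟩ h1
  · rw [← Real.sin_pi_sub x]
    exact hmono ⟨by linarith, hδ2⟩ ⟨by linarith, by linarith⟩ (by linarith)

lemma sin_abs_eq {x : ℝ} (h : |x| ≤ π) : |Real.sin x| = Real.sin |x| := by
  rcases le_total 0 x with h0 | h0
  · rw [abs_of_nonneg h0, abs_of_nonneg]
    exact Real.sin_nonneg_of_nonneg_of_le_pi h0 (by rwa [abs_of_nonneg h0] at h)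
  · rw [abs_of_nonpos h0] at h ⊢
    rw [Real.sin_neg]
    rw [abs_of_nonpos (Real.sin_nonpos_of_nonpos_of_neg_pi_le h0 (by linarith))]

lemma sqrt_two_div_le_sin (m : ℕ) (hm : 2 ≤ m) : Real.sqrt 2 / m ≤ Real.sin (π / (2 * m)) := by
  have hm' : (2:ℝ) ≤ m := by exact_mod_cast hm
  have hmpos : (0:ℝ) < m := by linarith
  have hconc := _root_.strictConcaveOn_sin_Icc.concaveOn
  have h0 : (0:ℝ) ∈ Set.Icc (0:ℝ) π := ⟨le_rfl, Real.pi_pos.le⟩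
  have h4 : (π/4 : ℝ) ∈ Set.Icc (0:ℝ) π := ⟨by positivity, by linarith [Real.pi_pos]⟩
  have hb : (0:ℝ) ≤ 2 / (m:ℝ) := by positivity
  have ha : (0:ℝ) ≤ 1 - 2 / (m:ℝ) := by
    rw [sub_nonneg, div_le_one hmpos]; exact hm'
  have hab : (1 - 2/(m:ℝ)) + 2/(m:ℝ) = 1 := by ring
  have := hconc.2 h0 h4 ha hb hab
  simp only [smul_eq_mul, mul_zero, Real.sin_zero, zero_add] at this
  have harg : (2/(m:ℝ)) * (π/4) = π / (2 * m) := by field_simp; ring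
  rw [harg, Real.sin_pi_div_four] at this
  calc Real.sqrt 2 / m = 2/(m:ℝ) * (Real.sqrt 2 / 2) := by ring
  _ ≤ Real.sin (π / (2*(m:ℝ))) := this

lemma twoDimLemma (m : ℕ) (hm : 2 ≤ m) (v : Fin m → EuclideanSpace ℝ (Fin 2))
    (hv : ∀ i, ‖v i‖ = 1) :
    ∃ yV : EuclideanSpace ℝ (Fin 2), ‖yV‖ = 1 ∧ ∀ i, Real.sqrt 2 / m ≤ |⟪v i, yV⟫| := by
  classical
  have hπ := Real.pi_pos
  have hmpos : 0 < m := by omega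
  have hmR : (0:ℝ) < m := by exact_mod_cast hmpos
  set δ : ℝ := π / (2 * m) with hδdef
  have hδpos : 0 < δ := by positivity
  have hδle : δ ≤ π / 4 := by
    rw [hδdef, div_le_div_iff₀ (by positivity) (by norm_num)]
    have : (2:ℝ) ≤ m := by exact_mod_cast hm
    nlinarith
  -- angles
  have hsq : ∀ i, (v i 0)^2 + (v i 1)^2 = 1 := by
    intro i
    have h := hv i
    rw [EuclideanSpace.norm_eq] at h
    have := congrArg (fun t => t^2) h
    simp only [one_pow] at this
    rw [Real.sq_sqrt (by positivity)] at this
    simpa [Fin.sum_univ_two, sq_abs] using this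
  set zc : Fin m → ℂ := fun i => ⟨v i 0, v i 1⟩ with hzc
  have hzabs : ∀ i, ‖zc i‖ = 1 := by
    intro i
    rw [Complex.norm_def, Complex.normSq_mk]
    rw [show (v i 0) * (v i 0) + (v i 1) * (v i 1) = (v i 0)^2 + (v i 1)^2 by ring, hsq i]
    exact Real.sqrt_one
  have hzne : ∀ i, zc i ≠ 0 := by
    intro i h
    have := hzabs i
    rw [h, norm_zero] at this
    norm_num at this
  set θ : Fin m → ℝ := fun i => Complex.arg (zc i) with hθ
  have hcosθ : ∀ i, Real.cos (θ i) = v i 0 := by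
    intro i
    rw [hθ, Complex.cos_arg (hzne i), hzabs i, div_one]
  have hsinθ : ∀ i, Real.sin (θ i) = v i 1 := by
    intro i
    rw [hθ, Complex.sin_arg, hzabs i, div_one]
  -- reduced points in [0, π)
  set p : Fin m → ℝ := fun i => π * Int.fract ((θ i + π/2) / π) with hp
  have hp0 : ∀ i, 0 ≤ p i := fun i => mul_nonneg hπ.le (Int.fract_nonneg _)
  have hpπ : ∀ i, p i < π := by
    intro i
    rw [hp]
    calc π * Int.fract ((θ i + π/2) / π) < π * 1 :=
      mul_lt_mul_of_pos_left (Int.fract_lt_one _) hπ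
    _ = π := mul_one _
  have hpθ : ∀ i, θ i = π * ⌊(θ i + π/2) / π⌋ + p i - π/2 := by
    intro i
    have hfr : Int.fract ((θ i + π/2) / π) = (θ i + π/2) / π - ⌊(θ i + π/2) / π⌋ :=
      (Int.self_sub_floor _).symm
    have hpi : p i = θ i + π/2 - π * ⌊(θ i + π/2) / π⌋ := by
      show π * Int.fract ((θ i + π/2) / π) = _
      rw [hfr, mul_sub, mul_div_cancel₀ _ hπ.ne']
    rw [hpi]
    ring
  -- key trig identity
  have htrig : ∀ (t : ℝ) (i : Fin m), |Real.cos (t - θ i)| = |Real.sin (t - p i)| := by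
    intro t i
    have : t - θ i = (t - p i) + π/2 - (⌊(θ i + π/2) / π⌋ : ℤ) * π := by
      have h := hpθ i
      linarith
    rw [this, Real.cos_sub_int_mul_pi, abs_mul]
    have h1 : |((-1:ℝ)) ^ (⌊(θ i + π / 2) / π⌋)| = 1 := by
      rcases Int.even_or_odd (⌊(θ i + π / 2) / π⌋) with he | ho
      · rw [he.neg_one_zpow]; exact abs_one
      · rw [ho.neg_one_zpow, abs_neg]; exact abs_one
    rw [h1, one_mul, Real.cos_add_pi_div_two, abs_neg]
  -- sorting
  set σ : Equiv.Perm (Fin m) := Tuple.sort p with hσ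
  set q : Fin m → ℝ := p ∘ σ with hq
  have hqmono : Monotone q := Tuple.monotone_sort p
  have hq0 : ∀ k, 0 ≤ q k := fun k => hp0 _
  have hqπ : ∀ k, q k < π := fun k => hpπ _
  have hm0 : (0:ℕ) < m := hmpos
  set r : ℕ → ℝ := fun j => if h : j < m then q ⟨j, h⟩ else q ⟨0, hm0⟩ + π with hr
  have hrj : ∀ (j) (h : j < m), r j = q ⟨j, h⟩ := fun j h => dif_pos h
  have hrm : r m = q ⟨0, hm0⟩ + π := dif_neg (lt_irrefl m)
  have hr_le : ∀ j k, j ≤ k → k ≤ m → r j ≤ r k := by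
    intro j k hjk hkm
    rcases eq_or_lt_of_le hkm with rfl | hk
    · rcases eq_or_lt_of_le hjk with rfl | hj
      · exact le_rfl
      · rw [hrj j hj, hrm]
        have h1 := (hqπ ⟨j, hj⟩).le
        have h2 := hq0 ⟨0, hm0⟩
        linarith
    · have hj : j < m := lt_of_le_of_lt hjk hk
      rw [hrj j hj, hrj k hk]
      exact hqmono (by rw [Fin.le_def]; exact hjk)
  have hsum : ∑ j ∈ Finset.range m, (r (j+1) - r j) = π := by
    rw [Finset.sum_range_sub, hrm, hrj 0 hm0]
    ring
  have hgap : ∃ j, j < m ∧ π / m ≤ r (j+1) - r j := by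
    by_contra hcon
    push_neg at hcon
    have hlt : ∑ j ∈ Finset.range m, (r (j+1) - r j) <
        ∑ _j ∈ Finset.range m, (π/(m:ℝ)) := by
      refine Finset.sum_lt_sum_of_nonempty ⟨0, Finset.mem_range.mpr hm0⟩ ?_
      intro j hj
      exact hcon j (Finset.mem_range.mp hj)
    rw [hsum, Finset.sum_const, Finset.card_range, nsmul_eq_mul,
      mul_div_cancel₀ _ hmR.ne'] at hlt
    exact lt_irrefl _ hlt
  obtain ⟨j, hjm, hG⟩ := hgap
  set t : ℝ := (r j + r (j+1)) / 2 with ht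
  have hδG : δ ≤ (r (j+1) - r j)/2 := by
    have : π/(2*(m:ℝ)) = (π/m)/2 := by ring
    rw [hδdef, this]
    linarith
  have hkey : ∀ k : Fin m, δ ≤ |t - q k| ∧ |t - q k| ≤ π - δ := by
    intro k
    have hrjq := hrj j hjm
    have hr1m : r (j+1) ≤ q ⟨0, hm0⟩ + π := by
      rw [← hrm]; exact hr_le (j+1) m hjm le_rfl
    have hq0k : q ⟨0, hm0⟩ ≤ q k := hqmono (by rw [Fin.le_def]; exact Nat.zero_le _)
    have hrj0 : 0 ≤ r j := by rw [hrjq]; exact hq0 _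
    rcases le_or_gt (k : ℕ) j with hkj | hjk
    · have hqk_rj : q k ≤ r j := by
        rw [hrjq]
        exact hqmono (by rw [Fin.le_def]; exact hkj)
      have h1 : δ ≤ t - q k := by
        have htr : t - r j = (r (j+1) - r j)/2 := by rw [ht]; ring
        linarith
      have h2 : t - q k ≤ π - δ := by
        have htr : t = r (j+1) - (r (j+1) - r j)/2 := by rw [ht]; ring
        linarith
      rw [abs_of_nonneg (by linarith : (0:ℝ) ≤ t - q k)]
      exact ⟨h1, h2⟩
    · have hj1m' : j+1 < m := lt_of_le_of_lt hjk k.isLt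
      have hqk_r1 : r (j+1) ≤ q k := by
        rw [hrj _ hj1m']
        exact hqmono (by rw [Fin.le_def]; exact hjk)
      have h1 : δ ≤ q k - t := by
        have htr : t = r (j+1) - (r (j+1) - r j)/2 := by rw [ht]; ring
        linarith
      have h2 : q k - t ≤ π - δ := by
        have htr : t - r j = (r (j+1) - r j)/2 := by rw [ht]; ring
        have := hqπ k
        linarith
      rw [abs_sub_comm, abs_of_nonneg (by linarith : (0:ℝ) ≤ q k - t)]
      exact ⟨h1, h2⟩
  -- conclusion
  set yV : EuclideanSpace ℝ (Fin 2) :=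
    (WithLp.equiv 2 (Fin 2 → ℝ)).symm ![Real.cos t, Real.sin t] with hyV
  have hyV0 : yV 0 = Real.cos t := rfl
  have hyV1' : yV 1 = Real.sin t := rfl
  have hyVnorm : ‖yV‖ = 1 := by
    rw [EuclideanSpace.norm_eq]
    rw [Fin.sum_univ_two, hyV0, hyV1', Real.norm_eq_abs, Real.norm_eq_abs, sq_abs, sq_abs]
    rw [Real.cos_sq_add_sin_sq]
    exact Real.sqrt_one
  refine ⟨yV, hyVnorm, ?_⟩
  intro i
  obtain ⟨k, hk⟩ : ∃ k : Fin m, q k = p i := ⟨σ.symm i, by rw [hq]; simp⟩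
  have hb := hkey k
  rw [hk] at hb
  have habs : |t - p i| ≤ π := by linarith [hb.2, hδpos.le]
  have hsin1 : Real.sin δ ≤ |Real.sin (t - p i)| := by
    rw [sin_abs_eq habs]
    refine sin_ge_of_mem hδpos ?_ hb.1 hb.2
    linarith
  have hinner : ⟪v i, yV⟫ = Real.cos (t - θ i) := by
    rw [PiLp.inner_apply]
    simp only [RCLike.inner_apply, conj_trivial, Fin.sum_univ_two, hyV0, hyV1']
    rw [← hcosθ i, ← hsinθ i, Real.cos_sub]
  rw [hinner, htrig t i]
  calc Real.sqrt 2 / m ≤ Real.sin δ := by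
        rw [hδdef]; exact sqrt_two_div_le_sin m hm
  _ ≤ |Real.sin (t - p i)| := hsin1

/-- Lemma 3.2: for an arbitrary norm on an `n`-dimensional space and nonzero functionals
`f₁, …, f_m`, there is a unit vector `y` with `|fᵢ(y)| ≥ ‖fᵢ‖ / (√n (n-1) m)` for all `i`. -/
theorem exists_unit_vector_functionals_large
    (n m : ℕ) (hn : 2 ≤ n)
    (X : Type*) [NormedAddCommGroup X] [NormedSpace ℝ X] [FiniteDimensional ℝ X]
    (hdim : Module.finrank ℝ X = n)
    (f : Fin m → (X →L[ℝ] ℝ)) (hf : ∀ i, f i ≠ 0) :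
    ∃ y : X, ‖y‖ = 1 ∧
      ∀ i, |f i y| ≥ ‖f i‖ / (Real.sqrt n * ((n : ℝ) - 1) * m) := by
  have hn0 : 0 < n := by omega
  have hfr : 0 < Module.finrank ℝ X := by omega
  have hnR : (2:ℝ) ≤ (n:ℝ) := by exact_mod_cast hn
  have hnpos : (0:ℝ) < n := by linarith
  have hsq1 : (1:ℝ) ≤ Real.sqrt n := by
    rw [show (1:ℝ) = Real.sqrt 1 from Real.sqrt_one.symm]
    exact Real.sqrt_le_sqrt (by linarith)
  have hn1 : (1:ℝ) ≤ (n:ℝ) - 1 := by linarith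
  rcases Nat.lt_or_ge m 2 with hm | hm
  · -- m = 0 or m = 1
    interval_cases m
    · obtain ⟨y, hy⟩ := exists_unit_vec hfr
      exact ⟨y, hy, fun i => i.elim0⟩
    · obtain ⟨x, hx1, hx2⟩ := exists_norm_attain hfr (f 0)
      refine ⟨x, hx1, fun i => ?_⟩
      have hi0 : i = 0 := Subsingleton.elim i 0
      subst hi0
      rw [ge_iff_le, hx2]
      have hD : (1:ℝ) ≤ Real.sqrt n * ((n:ℝ) - 1) * ((1:ℕ):ℝ) := by
        push_cast
        nlinarith
      exact div_le_self (norm_nonneg _) hD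
  · -- m ≥ 2
    have hmR : (2:ℝ) ≤ (m:ℝ) := by exact_mod_cast hm
    have hmpos : (0:ℝ) < m := by linarith
    rcases eq_or_lt_of_le hn with h2 | h3
    · -- n = 2
      subst h2
      obtain ⟨y, hy1, hy2⟩ := reduction 2 m (by norm_num) X hdim f hf (Real.sqrt 2 / m)
        (by positivity) (fun v hv => twoDimLemma m hm v hv)
      refine ⟨y, hy1, fun i => ?_⟩
      have h := hy2 i
      rw [ge_iff_le]
      have hsqrt2 : Real.sqrt 2 * Real.sqrt 2 = 2 := Real.mul_self_sqrt (by norm_num)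
      have hbound : ‖f i‖ / (Real.sqrt ((2:ℕ):ℝ) * (((2:ℕ):ℝ) - 1) * m)
          = ‖f i‖ * (Real.sqrt 2 / m) / ((2:ℕ):ℝ) := by
        push_cast
        rw [show ((2:ℝ) - 1) = 1 by norm_num, mul_one]
        rw [div_eq_div_iff (by positivity) (by norm_num)]
        field_simp
        linear_combination (-‖f i‖) * hsqrt2
      rw [hbound]
      exact h
    · -- n ≥ 3
      have hn3 : (3:ℝ) ≤ (n:ℝ) := by exact_mod_cast h3
      have H2 : ∀ v : Fin m → EuclideanSpace ℝ (Fin n), (∀ i, ‖v i‖ = 1) →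
          ∃ yV : EuclideanSpace ℝ (Fin n), ‖yV‖ = 1 ∧ ∀ i, 1/(m:ℝ) ≤ |⟪v i, yV⟫| := by
        intro v hv
        obtain ⟨s, hsm, hsi⟩ := signLemma m v hv
        have hs0 : s ≠ 0 := by
          intro h
          have := hsi ⟨0, by omega⟩
          rw [h, inner_zero_right] at this
          norm_num at this
        have hspos : (0:ℝ) < ‖s‖ := norm_pos_iff.mpr hs0
        refine ⟨‖s‖⁻¹ • s, ?_, fun i => ?_⟩
        · rw [norm_smul, norm_inv, norm_norm, inv_mul_cancel₀ hspos.ne']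
        · rw [real_inner_smul_right, abs_mul, abs_inv, abs_norm]
          have h1 : (1:ℝ) ≤ |⟪v i, s⟫| := hsi i
          have hsm' : ‖s‖ ≤ (m:ℝ) := hsm
          calc 1/(m:ℝ) ≤ 1/‖s‖ := by
                refine div_le_div_of_nonneg_left (by norm_num) hspos hsm'
          _ ≤ ‖s‖⁻¹ * |⟪v i, s⟫| := by
              rw [one_div]
              calc ‖s‖⁻¹ = ‖s‖⁻¹ * 1 := (mul_one _).symm
              _ ≤ ‖s‖⁻¹ * |⟪v i, s⟫| := mul_le_mul_of_nonneg_left h1 (by positivity)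
      obtain ⟨y, hy1, hy2⟩ := reduction n m hn0 X hdim f hf (1 / m)
        (by positivity) H2
      · refine ⟨y, hy1, fun i => ?_⟩
        have h := hy2 i
        rw [ge_iff_le]
        refine le_trans ?_ h
        have hkey : (n:ℝ) * m ≤ Real.sqrt n * ((n:ℝ) - 1) * m := by
          have h1 : Real.sqrt n ≤ (n:ℝ) - 1 := by
            rw [show (n:ℝ) - 1 = Real.sqrt (((n:ℝ)-1)^2) by
              rw [Real.sqrt_sq (by linarith)]]
            exact Real.sqrt_le_sqrt (by nlinarith)
          have h2 : (n:ℝ) = Real.sqrt n * Real.sqrt n :=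
            (Real.mul_self_sqrt hnpos.le).symm
          have hsqpos : (0:ℝ) < Real.sqrt n := by linarith
          have : Real.sqrt n * Real.sqrt n ≤ Real.sqrt n * ((n:ℝ) - 1) :=
            mul_le_mul_of_nonneg_left h1 hsqpos.le
          nlinarith
        have hform : ‖f i‖ * (1/(m:ℝ)) / (n:ℝ) = ‖f i‖ / ((n:ℝ) * m) := by
          rw [mul_one_div, div_div, mul_comm (m:ℝ) (n:ℝ)]
        rw [hform]
        refine div_le_div_of_nonneg_left (norm_nonneg _) (by positivity) hkey
end

section
/- Let x₁, …, x_m be pairwise distinct real numbers and let V be the m×m Vandermonde matrix whose i-th column is (1, x_i, x_i², …, x_i^{m-1}). Then the operator norm of V^{-1}, with respect to the supremum norm on ℝ^m, is at most max over 1 ≤ i ≤ m of the product over j ≠ i of (1 + |x_j|)/|x_j - x_i|. -/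
open Finset Polynomial

lemma abs_coeff_prod_le {ι : Type*} [DecidableEq ι] (s : Finset ι) (a : ι → ℝ) :
    ∀ k, |(∏ j ∈ s, (X - C (a j))).coeff k| ≤ (∏ j ∈ s, (X + C |a j|)).coeff k := by
  induction s using Finset.induction with
  | empty => intro k; simp [Polynomial.coeff_one]; split <;> simp
  | @insert i s hi ih =>
    intro k
    rw [Finset.prod_insert hi, Finset.prod_insert hi]
    have hP : (X - C (a i)) * ∏ j ∈ s, (X - C (a j))
        = X * ∏ j ∈ s, (X - C (a j)) - C (a i) * ∏ j ∈ s, (X - C (a j)) := by ring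
    have hQ : (X + C |a i|) * ∏ j ∈ s, (X + C |a j|)
        = X * ∏ j ∈ s, (X + C |a j|) + C |a i| * ∏ j ∈ s, (X + C |a j|) := by ring
    rw [hP, hQ]
    match k with
    | 0 =>
      simp only [Polynomial.coeff_sub, Polynomial.coeff_add, Polynomial.coeff_C_mul,
        Polynomial.coeff_X_mul_zero, zero_sub, zero_add, abs_neg, abs_mul, abs_abs]
      exact mul_le_mul_of_nonneg_left (ih 0) (abs_nonneg _)
    | k + 1 =>
      simp only [Polynomial.coeff_sub, Polynomial.coeff_add, Polynomial.coeff_C_mul,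
        Polynomial.coeff_X_mul]
      calc |(∏ j ∈ s, (X - C (a j))).coeff k - a i * (∏ j ∈ s, (X - C (a j))).coeff (k+1)|
          ≤ |(∏ j ∈ s, (X - C (a j))).coeff k| + |a i| * |(∏ j ∈ s, (X - C (a j))).coeff (k+1)| := by
            rw [← abs_mul]; exact abs_sub _ _
        _ ≤ _ := add_le_add (ih k) (mul_le_mul_of_nonneg_left (ih (k+1)) (abs_nonneg _))

/-- Gautschi's bound on the inverse of a Vandermonde matrix: with respect to the
supremum norm, `‖V⁻¹‖` (i.e. the maximal row sum of absolute values of entries of `V⁻¹`)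
is at most `max_i ∏_{j ≠ i} (1 + |x_j|)/|x_j - x_i|`. -/
theorem vandermonde_inverse_norm_bound
    (m : ℕ) (hm : 0 < m) (x : Fin m → ℝ) (hx : Function.Injective x)
    (V : Matrix (Fin m) (Fin m) ℝ) (hV : ∀ j i, V j i = x i ^ (j : ℕ)) :
    ∀ r : Fin m, ∑ c, |V⁻¹ r c| ≤
      univ.sup' (univ_nonempty_iff.mpr ⟨⟨0, hm⟩⟩)
        (fun i => ∏ j ∈ univ.erase i, (1 + |x j|) / |x j - x i|) := by
  have hxs : Set.InjOn x (univ : Finset (Fin m)) := fun a _ b _ h => hx h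
  -- natDegree of Lagrange basis
  have hdeg : ∀ i : Fin m, (Lagrange.basis univ x i).natDegree < m := by
    intro i
    rw [Lagrange.natDegree_basis hxs (mem_univ i), card_univ, Fintype.card_fin]
    omega
  -- W is a left inverse of V
  set W : Matrix (Fin m) (Fin m) ℝ := fun r c => (Lagrange.basis univ x r).coeff c with hW
  have hWV : W * V = 1 := by
    ext i j
    rw [Matrix.mul_apply, Matrix.one_apply]
    have : ∑ c, W i c * V c j = (Lagrange.basis univ x i).eval (x j) := by
      rw [Polynomial.eval_eq_sum_range' (hdeg i), ← Fin.sum_univ_eq_sum_range]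
      exact Finset.sum_congr rfl fun c _ => by rw [hW, hV]
    rw [this]
    by_cases hij : i = j
    · subst hij; simp [Lagrange.eval_basis_self hxs (mem_univ i)]
    · simp [hij, Lagrange.eval_basis_of_ne hij (mem_univ j)]
  have hVinv : V⁻¹ = W := Matrix.inv_eq_left_inv hWV
  intro r
  rw [hVinv]
  -- Factor the Lagrange basis polynomial
  have hfac : Lagrange.basis univ x r
      = Polynomial.C (∏ j ∈ univ.erase r, (x r - x j)⁻¹)
        * ∏ j ∈ univ.erase r, (Polynomial.X - Polynomial.C (x j)) := by
    rw [Lagrange.basis, map_prod, ← Finset.prod_mul_distrib]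
    rfl
  set P := ∏ j ∈ univ.erase r, (Polynomial.X - Polynomial.C (x j)) with hP
  set Q := ∏ j ∈ univ.erase r, (Polynomial.X + Polynomial.C |x j|) with hQ
  have hQdeg : Q.natDegree < m := by
    rw [hQ, Polynomial.natDegree_prod]
    · simp only [Polynomial.natDegree_X_add_C]
      rw [Finset.sum_const, smul_eq_mul, mul_one, card_erase_of_mem (mem_univ r),
        card_univ, Fintype.card_fin]
      omega
    · intro j _; exact Polynomial.X_add_C_ne_zero _
  have hQsum : ∑ c : Fin m, Q.coeff c = ∏ j ∈ univ.erase r, (1 + |x j|) := by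
    have := Polynomial.eval_eq_sum_range' hQdeg (1 : ℝ)
    simp only [one_pow, mul_one] at this
    rw [← Fin.sum_univ_eq_sum_range] at this
    rw [← this, hQ, Polynomial.eval_prod]
    exact Finset.prod_congr rfl fun j _ => by simp
  have key : ∑ c : Fin m, |W r c|
      ≤ (∏ j ∈ univ.erase r, |x r - x j|⁻¹) * ∏ j ∈ univ.erase r, (1 + |x j|) := by
    rw [← hQsum, Finset.mul_sum]
    apply Finset.sum_le_sum
    intro c _
    rw [hW]
    simp only [hfac, Polynomial.coeff_C_mul, abs_mul, Finset.abs_prod]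
    simp only [abs_inv]
    exact mul_le_mul_of_nonneg_left (abs_coeff_prod_le _ _ c)
      (Finset.prod_nonneg fun j _ => inv_nonneg.mpr (abs_nonneg _))
  refine key.trans ?_
  have heq : (∏ j ∈ univ.erase r, |x r - x j|⁻¹) * ∏ j ∈ univ.erase r, (1 + |x j|)
      = ∏ j ∈ univ.erase r, (1 + |x j|) / |x j - x r| := by
    rw [← Finset.prod_mul_distrib]
    exact Finset.prod_congr rfl fun j _ => by rw [abs_sub_comm, inv_mul_eq_div]
  rw [heq]
  exact Finset.le_sup' (fun i => ∏ j ∈ univ.erase i, (1 + |x j|) / |x j - x i|) (mem_univ r)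
end

section
/- For n ≥ 4, define functionals on ℝ^n by f_i(x) = x_i for 1 ≤ i ≤ n, f_{n+1}(x) = x₁ + x₂ + … + x_n, and f_{n+2}(x) = (x₁ + 2x₂ + … + n·x_n)/n. Then for every pair 0 ≤ j < k ≤ n+2 (with j, k ≥ 1), each of f_j and f_k can be written as a linear combination of the remaining n functionals {f_i : 1 ≤ i ≤ n+2, i ∉ {j,k}} with the sum of absolute values of the coefficients at most n². Consequently max{|f_j(x)|, |f_k(x)|} ≤ n²·max{|f_i(x)| : 1 ≤ i ≤ n+2, i ∉ {j,k}} for all x ∈ ℝ^n. -/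
open Finset

/-- The system of `n+2` functionals on `ℝⁿ`: `fᵢ(x) = xᵢ` for `1 ≤ i ≤ n`,
`f_{n+1}(x) = ∑ xᵢ`, `f_{n+2}(x) = (∑ i·xᵢ)/n`. -/
noncomputable def cornerFunctional (n : ℕ) (i : Fin (n + 2)) (x : Fin n → ℝ) : ℝ :=
  if h : (i : ℕ) < n then x ⟨i, h⟩
  else if (i : ℕ) = n then ∑ s, x s
  else (∑ s : Fin n, (((s : ℕ) : ℝ) + 1) * x s) / n

namespace CFAux


def emb (n : ℕ) (s : Fin n) : Fin (n + 2) := ⟨s.1, by omega⟩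
def Sidx (n : ℕ) : Fin (n + 2) := ⟨n, by omega⟩
def Tidx (n : ℕ) : Fin (n + 2) := ⟨n + 1, by omega⟩

@[simp] lemma emb_val (n : ℕ) (s : Fin n) : ((emb n s : Fin (n+2)) : ℕ) = (s : ℕ) := by simp [emb, Sidx, Tidx]
@[simp] lemma Sidx_val (n : ℕ) : ((Sidx n : Fin (n+2)) : ℕ) = n := by simp [emb, Sidx, Tidx]
@[simp] lemma Tidx_val (n : ℕ) : ((Tidx n : Fin (n+2)) : ℕ) = n + 1 := by simp [emb, Sidx, Tidx]

noncomputable def κ (n : ℕ) (d : Fin (n + 2)) (s : Fin n) : ℝ :=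
  if (d : ℕ) < n then (if (s : ℕ) = (d : ℕ) then 1 else 0)
  else if (d : ℕ) = n then 1 else (((s : ℕ) : ℝ) + 1) / n

lemma sum_split (n : ℕ) (F : Fin (n + 2) → ℝ) :
    ∑ i, F i = (∑ s : Fin n, F (emb n s)) + F (Sidx n) + F (Tidx n) := by
  have h1 : ∀ i : Fin n, (i.castSucc.castSucc : Fin (n+2)) = emb n i := by
    intro i; ext; simp [emb]
  have h2 : ((Fin.last n).castSucc : Fin (n+2)) = Sidx n := by ext; simp [Sidx]
  have h3 : (Fin.last (n+1) : Fin (n+2)) = Tidx n := by ext; simp [Tidx]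
  rw [Fin.sum_univ_castSucc, Fin.sum_univ_castSucc, h2, h3,
    Finset.sum_congr rfl fun i _ => congrArg F (h1 i)]

lemma cf_eq_sum (n : ℕ) (d : Fin (n + 2)) (x : Fin n → ℝ) :
    cornerFunctional n d x = ∑ s, κ n d s * x s := by
  by_cases h1 : (d : ℕ) < n
  · simp only [cornerFunctional, dif_pos h1]
    have hterm : ∀ s : Fin n, κ n d s * x s = if s = ⟨d, h1⟩ then x s else 0 := by
      intro s
      unfold κ
      rw [if_pos h1]
      rcases eq_or_ne s (⟨d, h1⟩ : Fin n) with h | h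
      · simp [h]
      · rw [if_neg (by simpa [Fin.ext_iff] using h), if_neg h, zero_mul]
    rw [Finset.sum_congr rfl fun s _ => hterm s,
      Finset.sum_ite_eq' univ (⟨d, h1⟩ : Fin n) x]
    simp
  · simp only [cornerFunctional, dif_neg h1]
    have hκ : ∀ s : Fin n, κ n d s = if (d : ℕ) = n then 1 else (((s:ℕ):ℝ)+1)/n := by
      intro s; unfold κ; rw [if_neg h1]
    by_cases h2 : (d : ℕ) = n
    · rw [if_pos h2]
      exact (Finset.sum_congr rfl fun s _ => by rw [hκ, if_pos h2, one_mul]).symm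
    · rw [if_neg h2, Finset.sum_div]
      refine Finset.sum_congr rfl fun s _ => ?_
      rw [hκ, if_neg h2]; ring

lemma sum_c_mul_kappa (n : ℕ) (c : Fin (n + 2) → ℝ) (s : Fin n) :
    ∑ i, c i * κ n i s
      = c (emb n s) + c (Sidx n) + c (Tidx n) * ((((s : ℕ) : ℝ) + 1) / n) := by
  rw [sum_split n (fun i => c i * κ n i s)]
  have hS : κ n (Sidx n) s = 1 := by simp [κ]
  have hT : κ n (Tidx n) s = (((s : ℕ) : ℝ) + 1) / n := by simp [κ]
  have hterm : ∀ i : Fin n, c (emb n i) * κ n (emb n i) s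
      = if i = s then c (emb n i) else 0 := by
    intro i
    unfold κ
    rw [if_pos (show ((emb n i : Fin (n+2)) : ℕ) < n from i.isLt)]
    simp only [emb_val]
    rcases eq_or_ne i s with h | h
    · simp [h]
    · rw [if_neg (fun hh => h (Fin.ext hh.symm)), mul_zero, if_neg h]
  rw [hS, hT, mul_one,
    Finset.sum_congr rfl fun i _ => hterm i,
    Finset.sum_ite_eq' univ s (fun i => c (emb n i))]
  simp

lemma mk_identity (n : ℕ) (c : Fin (n + 2) → ℝ) (j : Fin (n + 2))
    (h : ∀ s : Fin n, κ n j s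
        = c (emb n s) + c (Sidx n) + c (Tidx n) * ((((s : ℕ) : ℝ) + 1) / n)) :
    ∀ x, cornerFunctional n j x = ∑ i, c i * cornerFunctional n i x := by
  intro x
  rw [cf_eq_sum]
  have hh : ∀ i : Fin (n+2), c i * cornerFunctional n i x = ∑ s, c i * κ n i s * x s := by
    intro i
    rw [cf_eq_sum, Finset.mul_sum]
    exact Finset.sum_congr rfl fun s _ => by ring
  rw [Finset.sum_congr rfl fun i _ => hh i, Finset.sum_comm]
  refine Finset.sum_congr rfl fun s _ => ?_
  rw [h s, ← Finset.sum_mul, sum_c_mul_kappa]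

lemma abs_sum_split (n : ℕ) (c : Fin (n + 2) → ℝ) :
    ∑ i, |c i| = (∑ s : Fin n, |c (emb n s)|) + |c (Sidx n)| + |c (Tidx n)| :=
  sum_split n fun i => |c i|



lemma one_le_abs_cast_sub {a b : ℕ} (h : a ≠ b) : 1 ≤ |((b : ℕ) : ℝ) - ((a : ℕ) : ℝ)| := by
  rcases lt_or_gt_of_ne h with h' | h'
  · have h2 : ((a:ℕ):ℝ) + 1 ≤ ((b:ℕ):ℝ) := by exact_mod_cast h'
    rw [abs_of_nonneg (by linarith)]; linarith
  · have h2 : ((b:ℕ):ℝ) + 1 ≤ ((a:ℕ):ℝ) := by exact_mod_cast h'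
    rw [abs_of_nonpos (by linarith)]; linarith

lemma coord_sum_le (n : ℕ) (g : Fin n → ℝ) (M : ℝ) (h : ∀ s, |g s| ≤ M) :
    ∑ s, |g s| ≤ (n : ℝ) * M := by
  calc ∑ s, |g s| ≤ (univ : Finset (Fin n)).card • M :=
        Finset.sum_le_card_nsmul _ _ _ (fun s _ => h s)
    _ = (n : ℝ) * M := by rw [Finset.card_univ, Fintype.card_fin, nsmul_eq_mul]

lemma coord_sum_le_erase1 (n : ℕ) (hn : 1 ≤ n) (g : Fin n → ℝ) (M : ℝ)
    (a : Fin n) (ha : g a = 0) (h : ∀ s, |g s| ≤ M) :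
    ∑ s, |g s| ≤ ((n : ℝ) - 1) * M := by
  have e1 : ∑ s ∈ univ.erase a, |g s| = ∑ s, |g s| :=
    Finset.sum_erase _ (by simp [ha])
  rw [← e1]
  calc ∑ s ∈ univ.erase a, |g s| ≤ (univ.erase a).card • M :=
        Finset.sum_le_card_nsmul _ _ _ (fun s _ => h s)
    _ = (((n : ℕ) - 1 : ℕ) : ℝ) * M := by
        rw [Finset.card_erase_of_mem (Finset.mem_univ a), Finset.card_univ,
          Fintype.card_fin, nsmul_eq_mul]
    _ = ((n : ℝ) - 1) * M := by rw [Nat.cast_sub hn]; norm_num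

lemma coord_sum_le_erase2 (n : ℕ) (hn : 2 ≤ n) (g : Fin n → ℝ) (M : ℝ)
    (a b : Fin n) (hab : a ≠ b) (ha : g a = 0) (hb : g b = 0) (h : ∀ s, |g s| ≤ M) :
    ∑ s, |g s| ≤ ((n : ℝ) - 2) * M := by
  have e1 : ∑ s ∈ (univ.erase a).erase b, |g s| = ∑ s, |g s| := by
    rw [Finset.sum_erase _ (by simp [hb]), Finset.sum_erase _ (by simp [ha])]
  rw [← e1]
  calc ∑ s ∈ (univ.erase a).erase b, |g s| ≤ ((univ.erase a).erase b).card • M :=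
        Finset.sum_le_card_nsmul _ _ _ (fun s _ => h s)
    _ = (((n : ℕ) - 1 - 1 : ℕ) : ℝ) * M := by
        rw [Finset.card_erase_of_mem (Finset.mem_erase.mpr ⟨hab.symm, Finset.mem_univ b⟩),
          Finset.card_erase_of_mem (Finset.mem_univ a), Finset.card_univ, Fintype.card_fin,
          nsmul_eq_mul]
    _ = ((n : ℝ) - 2) * M := by
        have : (n : ℕ) - 1 - 1 = n - 2 := by omega
        rw [this, Nat.cast_sub hn]; norm_num

lemma abs_le_mul_of_expr {ι : Type*} [Fintype ι] (B M v : ℝ) (hM0 : 0 ≤ M) (c g : ι → ℝ)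
    (hle : ∀ i, c i ≠ 0 → |g i| ≤ M) (hsum : ∑ i, |c i| ≤ B) (hid : v = ∑ i, c i * g i) :
    |v| ≤ B * M := by
  calc |v| = |∑ i, c i * g i| := by rw [hid]
    _ ≤ ∑ i, |c i * g i| := Finset.abs_sum_le_sum_abs _ _
    _ = ∑ i, |c i| * |g i| := Finset.sum_congr rfl fun i _ => abs_mul _ _
    _ ≤ ∑ i, |c i| * M := Finset.sum_le_sum fun i _ => by
        by_cases h : c i = 0
        · simp [h]
        · exact mul_le_mul_of_nonneg_left (hle i h) (abs_nonneg _)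
    _ = (∑ i, |c i|) * M := (Finset.sum_mul _ _ _).symm
    _ ≤ B * M := mul_le_mul_of_nonneg_right hsum hM0


lemma exprA (n : ℕ) (hn : 4 ≤ n) (j k : Fin (n + 2)) (hjk : j ≠ k) :
    ∃ c : Fin (n + 2) → ℝ, c j = 0 ∧ c k = 0 ∧
      (∀ x, cornerFunctional n j x = ∑ i, c i * cornerFunctional n i x) ∧
      ∑ i, |c i| ≤ (n : ℝ) ^ 2 := by
  have hvjk : (j : ℕ) ≠ (k : ℕ) := fun h => hjk (Fin.ext h)
  have hN0 : (n : ℝ) ≠ 0 := Nat.cast_ne_zero.mpr (by omega)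
  have hN4 : (4 : ℝ) ≤ (n : ℝ) := by exact_mod_cast hn
  have hNpos : (0 : ℝ) < (n : ℝ) := by linarith
  have key1 : ((n:ℝ)-2)*((n:ℝ)-1) + (n:ℝ) + (n:ℝ) ≤ (n:ℝ)^2 := by nlinarith
  have key2 : ((n:ℝ)-1)*(n:ℝ) + (n:ℝ) ≤ (n:ℝ)^2 := by nlinarith
  have key3 : (n:ℝ)*1 + 1 ≤ (n:ℝ)^2 := by nlinarith
  have key4 : (n:ℝ)*((n:ℝ)-1) + (n:ℝ) ≤ (n:ℝ)^2 := by nlinarith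
  have key5 : (n:ℝ)*1 ≤ (n:ℝ)^2 := by nlinarith
  have hjlt : (j : ℕ) < n + 2 := j.isLt
  have hklt : (k : ℕ) < n + 2 := k.isLt
  by_cases hj : (j : ℕ) < n
  · have hAle : ((j : ℕ) : ℝ) ≤ (n : ℝ) - 1 := by
      have : (j : ℕ) + 1 ≤ n := hj
      have := (Nat.cast_le (α := ℝ)).mpr this
      push_cast at this; linarith
    have hA0 : (0 : ℝ) ≤ ((j : ℕ) : ℝ) := Nat.cast_nonneg _
    by_cases hk : (k : ℕ) < n
    · -- case a : both coordinates
      have hBle : ((k : ℕ) : ℝ) ≤ (n : ℝ) - 1 := by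
        have : (k : ℕ) + 1 ≤ n := hk
        have := (Nat.cast_le (α := ℝ)).mpr this
        push_cast at this; linarith
      have hB0 : (0 : ℝ) ≤ ((k : ℕ) : ℝ) := Nat.cast_nonneg _
      have hBA : ((k : ℕ) : ℝ) - ((j : ℕ) : ℝ) ≠ 0 :=
        sub_ne_zero.mpr (fun h => hvjk (by exact_mod_cast h.symm))
      have hBA1 : 1 ≤ |((k : ℕ) : ℝ) - ((j : ℕ) : ℝ)| := one_le_abs_cast_sub hvjk
      set c : Fin (n + 2) → ℝ := fun i =>
        if (i : ℕ) = (j : ℕ) then 0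
        else if (i : ℕ) < n then (((i : ℕ) : ℝ) - ((k : ℕ) : ℝ)) / (((k : ℕ) : ℝ) - ((j : ℕ) : ℝ))
        else if (i : ℕ) = n then (((k : ℕ) : ℝ) + 1) / (((k : ℕ) : ℝ) - ((j : ℕ) : ℝ))
        else -(n : ℝ) / (((k : ℕ) : ℝ) - ((j : ℕ) : ℝ)) with hc
      have hcj : c j = 0 := by simp [hc]
      have hck : c k = 0 := by
        simp only [hc]; rw [if_neg (Ne.symm hvjk), if_pos hk, sub_self, zero_div]
      have hcS : c (Sidx n) = (((k : ℕ) : ℝ) + 1) / (((k : ℕ) : ℝ) - ((j : ℕ) : ℝ)) := by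
        simp only [hc, Sidx_val]
        rw [if_neg (by omega), if_neg (by omega)]; simp
      have hcT : c (Tidx n) = -(n : ℝ) / (((k : ℕ) : ℝ) - ((j : ℕ) : ℝ)) := by
        simp only [hc, Tidx_val]
        rw [if_neg (by omega), if_neg (by omega), if_neg (by omega)]
      have hce : ∀ s : Fin n, (s : ℕ) ≠ (j : ℕ) →
          c (emb n s) = (((s : ℕ) : ℝ) - ((k : ℕ) : ℝ)) / (((k : ℕ) : ℝ) - ((j : ℕ) : ℝ)) := by
        intro s hs
        simp only [hc, emb_val]; rw [if_neg hs, if_pos s.isLt]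
      have hcej : ∀ s : Fin n, (s : ℕ) = (j : ℕ) → c (emb n s) = 0 := by
        intro s hs
        simp only [hc, emb_val]; rw [if_pos hs]
      clear_value c
      refine ⟨c, hcj, hck, mk_identity n c j ?_, ?_⟩
      · intro s
        unfold κ
        rw [if_pos hj, hcS, hcT]
        rcases eq_or_ne (s : ℕ) (j : ℕ) with h | h
        · rw [if_pos h, hcej s h]
          have hsA : ((s : ℕ) : ℝ) = ((j : ℕ) : ℝ) := by exact_mod_cast h
          rw [hsA]
          field_simp
          ring
        · rw [if_neg h, hce s h]
          field_simp
          ring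
      · rw [abs_sum_split]
        have h1 : ∑ s : Fin n, |c (emb n s)| ≤ ((n : ℝ) - 2) * ((n : ℝ) - 1) := by
          apply coord_sum_le_erase2 n (by omega) _ _ (⟨(j : ℕ), hj⟩ : Fin n) (⟨(k : ℕ), hk⟩ : Fin n)
            (fun h => hvjk (by simpa [Fin.ext_iff] using h))
          · show c (emb n ⟨(j : ℕ), hj⟩) = 0
            exact hcej _ rfl
          · show c (emb n ⟨(k : ℕ), hk⟩) = 0
            rw [show emb n (⟨(k : ℕ), hk⟩ : Fin n) = k from rfl]; exact hck
          · intro s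
            rcases eq_or_ne (s : ℕ) (j : ℕ) with h | h
            · rw [hcej s h, abs_zero]; linarith
            · rw [hce s h, abs_div]
              have h2 : |((s : ℕ) : ℝ) - ((k : ℕ) : ℝ)| ≤ (n : ℝ) - 1 := by
                have hs1 : ((s : ℕ) : ℝ) ≤ (n : ℝ) - 1 := by
                  have : (s : ℕ) + 1 ≤ n := s.isLt
                  have := (Nat.cast_le (α := ℝ)).mpr this
                  push_cast at this; linarith
                have hs0 : (0 : ℝ) ≤ ((s : ℕ) : ℝ) := Nat.cast_nonneg _
                rw [abs_le]; constructor <;> linarith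
              calc |((s : ℕ) : ℝ) - ((k : ℕ) : ℝ)| / |((k : ℕ) : ℝ) - ((j : ℕ) : ℝ)|
                  ≤ |((s : ℕ) : ℝ) - ((k : ℕ) : ℝ)| := div_le_self (abs_nonneg _) hBA1
                _ ≤ (n : ℝ) - 1 := h2
        have h2 : |c (Sidx n)| ≤ (n : ℝ) := by
          rw [hcS, abs_div]
          calc |((k : ℕ) : ℝ) + 1| / |((k : ℕ) : ℝ) - ((j : ℕ) : ℝ)|
              ≤ |((k : ℕ) : ℝ) + 1| := div_le_self (abs_nonneg _) hBA1
            _ = ((k : ℕ) : ℝ) + 1 := abs_of_nonneg (by linarith)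
            _ ≤ (n : ℝ) := by linarith
        have h3 : |c (Tidx n)| ≤ (n : ℝ) := by
          rw [hcT, abs_div, abs_neg]
          calc |(n : ℝ)| / |((k : ℕ) : ℝ) - ((j : ℕ) : ℝ)|
              ≤ |(n : ℝ)| := div_le_self (abs_nonneg _) hBA1
            _ = (n : ℝ) := abs_of_nonneg (by linarith)
        linarith [h1, h2, h3, key1]
    · by_cases hk2 : (k : ℕ) = n
      · -- case b : coordinate j, k = S
        have hA1 : ((j : ℕ) : ℝ) + 1 ≠ 0 := by positivity
        set c : Fin (n + 2) → ℝ := fun i =>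
          if (i : ℕ) = (j : ℕ) then 0
          else if (i : ℕ) < n then -((((i : ℕ) : ℝ) + 1) / (((j : ℕ) : ℝ) + 1))
          else if (i : ℕ) = n then 0
          else (n : ℝ) / (((j : ℕ) : ℝ) + 1) with hc
        have hcj : c j = 0 := by simp [hc]
        have hck : c k = 0 := by
          simp only [hc]; rw [if_neg (by omega), if_neg (by omega), if_pos hk2]
        have hcS : c (Sidx n) = 0 := by
          simp only [hc, Sidx_val]
          rw [if_neg (by omega), if_neg (by omega)]; simp
        have hcT : c (Tidx n) = (n : ℝ) / (((j : ℕ) : ℝ) + 1) := by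
          simp only [hc, Tidx_val]
          rw [if_neg (by omega), if_neg (by omega), if_neg (by omega)]
        have hce : ∀ s : Fin n, (s : ℕ) ≠ (j : ℕ) →
            c (emb n s) = -((((s : ℕ) : ℝ) + 1) / (((j : ℕ) : ℝ) + 1)) := by
          intro s hs
          simp only [hc, emb_val]; rw [if_neg hs, if_pos s.isLt]
        have hcej : ∀ s : Fin n, (s : ℕ) = (j : ℕ) → c (emb n s) = 0 := by
          intro s hs
          simp only [hc, emb_val]; rw [if_pos hs]
        clear_value c
        refine ⟨c, hcj, hck, mk_identity n c j ?_, ?_⟩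
        · intro s
          unfold κ
          rw [if_pos hj, hcS, hcT]
          rcases eq_or_ne (s : ℕ) (j : ℕ) with h | h
          · rw [if_pos h, hcej s h]
            have hsA : ((s : ℕ) : ℝ) = ((j : ℕ) : ℝ) := by exact_mod_cast h
            rw [hsA]
            field_simp
            ring
          · rw [if_neg h, hce s h]
            field_simp
            ring
        · rw [abs_sum_split]
          have h1 : ∑ s : Fin n, |c (emb n s)| ≤ ((n : ℝ) - 1) * (n : ℝ) := by
            apply coord_sum_le_erase1 n (by omega) _ _ (⟨(j : ℕ), hj⟩ : Fin n)
            · show c (emb n ⟨(j : ℕ), hj⟩) = 0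
              exact hcej _ rfl
            · intro s
              rcases eq_or_ne (s : ℕ) (j : ℕ) with h | h
              · rw [hcej s h, abs_zero]; linarith
              · rw [hce s h, abs_neg, abs_div]
                have hs1 : ((s : ℕ) : ℝ) + 1 ≤ (n : ℝ) := by exact_mod_cast s.isLt
                have hs0 : (0 : ℝ) ≤ ((s : ℕ) : ℝ) := Nat.cast_nonneg _
                calc |((s : ℕ) : ℝ) + 1| / |((j : ℕ) : ℝ) + 1|
                    ≤ |((s : ℕ) : ℝ) + 1| :=
                      div_le_self (abs_nonneg _) (by rw [abs_of_nonneg (by linarith)]; linarith)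
                  _ = ((s : ℕ) : ℝ) + 1 := abs_of_nonneg (by linarith)
                  _ ≤ (n : ℝ) := hs1
          have h2 : |c (Sidx n)| = 0 := by rw [hcS, abs_zero]
          have h3 : |c (Tidx n)| ≤ (n : ℝ) := by
            rw [hcT, abs_div]
            calc |(n : ℝ)| / |((j : ℕ) : ℝ) + 1|
                ≤ |(n : ℝ)| := div_le_self (abs_nonneg _) (by rw [abs_of_nonneg (by linarith)]; linarith)
              _ = (n : ℝ) := abs_of_nonneg (by linarith)
          linarith [h1, h2, h3, key2]
      · -- case c : coordinate j, k = T
        have hk3 : (k : ℕ) = n + 1 := by omega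
        set c : Fin (n + 2) → ℝ := fun i =>
          if (i : ℕ) = (j : ℕ) then 0
          else if (i : ℕ) < n then -1
          else if (i : ℕ) = n then 1
          else 0 with hc
        have hcj : c j = 0 := by simp [hc]
        have hck : c k = 0 := by
          simp only [hc]; rw [if_neg (by omega), if_neg (by omega), if_neg (by omega)]
        have hcS : c (Sidx n) = 1 := by
          simp only [hc, Sidx_val]
          rw [if_neg (by omega), if_neg (by omega)]; simp
        have hcT : c (Tidx n) = 0 := by
          simp only [hc, Tidx_val]
          rw [if_neg (by omega), if_neg (by omega), if_neg (by omega)]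
        have hce : ∀ s : Fin n, (s : ℕ) ≠ (j : ℕ) → c (emb n s) = -1 := by
          intro s hs
          simp only [hc, emb_val]; rw [if_neg hs, if_pos s.isLt]
        have hcej : ∀ s : Fin n, (s : ℕ) = (j : ℕ) → c (emb n s) = 0 := by
          intro s hs
          simp only [hc, emb_val]; rw [if_pos hs]
        clear_value c
        refine ⟨c, hcj, hck, mk_identity n c j ?_, ?_⟩
        · intro s
          unfold κ
          rw [if_pos hj, hcS, hcT]
          rcases eq_or_ne (s : ℕ) (j : ℕ) with h | h
          · rw [if_pos h, hcej s h]; ring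
          · rw [if_neg h, hce s h]; ring
        · rw [abs_sum_split]
          have h1 : ∑ s : Fin n, |c (emb n s)| ≤ (n : ℝ) * 1 := by
            apply coord_sum_le n
            intro s
            rcases eq_or_ne (s : ℕ) (j : ℕ) with h | h
            · rw [hcej s h, abs_zero]; norm_num
            · rw [hce s h]; norm_num
          have h2 : |c (Sidx n)| = 1 := by rw [hcS, abs_one]
          have h3 : |c (Tidx n)| = 0 := by rw [hcT, abs_zero]
          linarith [h1, h2, h3, key3]
  · by_cases hj2 : (j : ℕ) = n
    · by_cases hk : (k : ℕ) < n
      · -- case d : j = S, coordinate k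
        have hB0 : (0 : ℝ) ≤ ((k : ℕ) : ℝ) := Nat.cast_nonneg _
        have hB1 : (1 : ℝ) ≤ ((k : ℕ) : ℝ) + 1 := by linarith
        have hB1' : ((k : ℕ) : ℝ) + 1 ≠ 0 := by positivity
        set c : Fin (n + 2) → ℝ := fun i =>
          if (i : ℕ) = (k : ℕ) then 0
          else if (i : ℕ) < n then (((k : ℕ) : ℝ) - ((i : ℕ) : ℝ)) / (((k : ℕ) : ℝ) + 1)
          else if (i : ℕ) = n then 0
          else (n : ℝ) / (((k : ℕ) : ℝ) + 1) with hc
        have hcj : c j = 0 := by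
          simp only [hc]; rw [if_neg (by omega), if_neg (by omega), if_pos hj2]
        have hck : c k = 0 := by simp [hc]
        have hcS : c (Sidx n) = 0 := by
          simp only [hc, Sidx_val]
          rw [if_neg (by omega), if_neg (by omega)]; simp
        have hcT : c (Tidx n) = (n : ℝ) / (((k : ℕ) : ℝ) + 1) := by
          simp only [hc, Tidx_val]
          rw [if_neg (by omega), if_neg (by omega), if_neg (by omega)]
        have hce : ∀ s : Fin n, (s : ℕ) ≠ (k : ℕ) →
            c (emb n s) = (((k : ℕ) : ℝ) - ((s : ℕ) : ℝ)) / (((k : ℕ) : ℝ) + 1) := by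
          intro s hs
          simp only [hc, emb_val]; rw [if_neg hs, if_pos s.isLt]
        have hcek : ∀ s : Fin n, (s : ℕ) = (k : ℕ) → c (emb n s) = 0 := by
          intro s hs
          simp only [hc, emb_val]; rw [if_pos hs]
        clear_value c
        refine ⟨c, hcj, hck, mk_identity n c j ?_, ?_⟩
        · intro s
          unfold κ
          rw [if_neg hj, if_pos hj2, hcS, hcT]
          rcases eq_or_ne (s : ℕ) (k : ℕ) with h | h
          · rw [hcek s h]
            have hsB : ((s : ℕ) : ℝ) = ((k : ℕ) : ℝ) := by exact_mod_cast h
            rw [hsB]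
            field_simp
            ring
          · rw [hce s h]
            field_simp
            ring
        · rw [abs_sum_split]
          have h1 : ∑ s : Fin n, |c (emb n s)| ≤ (n : ℝ) * ((n : ℝ) - 1) := by
            apply coord_sum_le n
            intro s
            rcases eq_or_ne (s : ℕ) (k : ℕ) with h | h
            · rw [hcek s h, abs_zero]; linarith
            · rw [hce s h, abs_div]
              have hs1 : ((s : ℕ) : ℝ) ≤ (n : ℝ) - 1 := by
                have : (s : ℕ) + 1 ≤ n := s.isLt
                have := (Nat.cast_le (α := ℝ)).mpr this
                push_cast at this; linarith
              have hs0 : (0 : ℝ) ≤ ((s : ℕ) : ℝ) := Nat.cast_nonneg _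
              have hk1 : ((k : ℕ) : ℝ) ≤ (n : ℝ) - 1 := by
                have : (k : ℕ) + 1 ≤ n := hk
                have := (Nat.cast_le (α := ℝ)).mpr this
                push_cast at this; linarith
              calc |((k : ℕ) : ℝ) - ((s : ℕ) : ℝ)| / |((k : ℕ) : ℝ) + 1|
                  ≤ |((k : ℕ) : ℝ) - ((s : ℕ) : ℝ)| :=
                    div_le_self (abs_nonneg _) (by rw [abs_of_nonneg (by linarith)]; linarith)
                _ ≤ (n : ℝ) - 1 := by rw [abs_le]; constructor <;> linarith
          have h2 : |c (Sidx n)| = 0 := by rw [hcS, abs_zero]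
          have h3 : |c (Tidx n)| ≤ (n : ℝ) := by
            rw [hcT, abs_div]
            calc |(n : ℝ)| / |((k : ℕ) : ℝ) + 1|
                ≤ |(n : ℝ)| := div_le_self (abs_nonneg _) (by rw [abs_of_nonneg (by linarith)]; linarith)
              _ = (n : ℝ) := abs_of_nonneg (by linarith)
          linarith [h1, h2, h3, key4]
      · -- case e : j = S, k = T
        have hk3 : (k : ℕ) = n + 1 := by omega
        set c : Fin (n + 2) → ℝ := fun i => if (i : ℕ) < n then 1 else 0 with hc
        have hcj : c j = 0 := by simp only [hc]; rw [if_neg (by omega)]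
        have hck : c k = 0 := by simp only [hc]; rw [if_neg (by omega)]
        have hcS : c (Sidx n) = 0 := by simp only [hc, Sidx_val]; rw [if_neg (by omega)]
        have hcT : c (Tidx n) = 0 := by simp only [hc, Tidx_val]; rw [if_neg (by omega)]
        have hce : ∀ s : Fin n, c (emb n s) = 1 := by
          intro s; simp only [hc, emb_val]; rw [if_pos s.isLt]
        clear_value c
        refine ⟨c, hcj, hck, mk_identity n c j ?_, ?_⟩
        · intro s
          unfold κ
          rw [if_neg hj, if_pos hj2, hcS, hcT, hce s]
          ring
        · rw [abs_sum_split]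
          have h1 : ∑ s : Fin n, |c (emb n s)| ≤ (n : ℝ) * 1 := by
            apply coord_sum_le n
            intro s
            rw [hce s, abs_one]
          have h2 : |c (Sidx n)| = 0 := by rw [hcS, abs_zero]
          have h3 : |c (Tidx n)| = 0 := by rw [hcT, abs_zero]
          linarith [h1, h2, h3, key5]
    · have hj3 : (j : ℕ) = n + 1 := by omega
      by_cases hk : (k : ℕ) < n
      · -- case f : j = T, coordinate k
        have hB0 : (0 : ℝ) ≤ ((k : ℕ) : ℝ) := Nat.cast_nonneg _
        have hBn : ((k : ℕ) : ℝ) + 1 ≤ (n : ℝ) := by exact_mod_cast hk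
        set c : Fin (n + 2) → ℝ := fun i =>
          if (i : ℕ) = (k : ℕ) then 0
          else if (i : ℕ) < n then (((i : ℕ) : ℝ) - ((k : ℕ) : ℝ)) / (n : ℝ)
          else if (i : ℕ) = n then (((k : ℕ) : ℝ) + 1) / (n : ℝ)
          else 0 with hc
        have hcj : c j = 0 := by
          simp only [hc]; rw [if_neg (by omega), if_neg (by omega), if_neg (by omega)]
        have hck : c k = 0 := by simp [hc]
        have hcS : c (Sidx n) = (((k : ℕ) : ℝ) + 1) / (n : ℝ) := by
          simp only [hc, Sidx_val]
          rw [if_neg (by omega), if_neg (by omega)]; simp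
        have hcT : c (Tidx n) = 0 := by
          simp only [hc, Tidx_val]
          rw [if_neg (by omega), if_neg (by omega), if_neg (by omega)]
        have hce : ∀ s : Fin n, (s : ℕ) ≠ (k : ℕ) →
            c (emb n s) = (((s : ℕ) : ℝ) - ((k : ℕ) : ℝ)) / (n : ℝ) := by
          intro s hs
          simp only [hc, emb_val]; rw [if_neg hs, if_pos s.isLt]
        have hcek : ∀ s : Fin n, (s : ℕ) = (k : ℕ) → c (emb n s) = 0 := by
          intro s hs
          simp only [hc, emb_val]; rw [if_pos hs]
        clear_value c
        refine ⟨c, hcj, hck, mk_identity n c j ?_, ?_⟩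
        · intro s
          unfold κ
          rw [if_neg hj, if_neg hj2, hcS, hcT]
          rcases eq_or_ne (s : ℕ) (k : ℕ) with h | h
          · rw [hcek s h]
            have hsB : ((s : ℕ) : ℝ) = ((k : ℕ) : ℝ) := by exact_mod_cast h
            rw [hsB]
            ring
          · rw [hce s h]
            field_simp
            ring
        · rw [abs_sum_split]
          have h1 : ∑ s : Fin n, |c (emb n s)| ≤ (n : ℝ) * 1 := by
            apply coord_sum_le n
            intro s
            rcases eq_or_ne (s : ℕ) (k : ℕ) with h | h
            · rw [hcek s h, abs_zero]; norm_num
            · rw [hce s h, abs_div, abs_of_nonneg (le_of_lt hNpos), div_le_one hNpos]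
              have hs1 : ((s : ℕ) : ℝ) + 1 ≤ (n : ℝ) := by exact_mod_cast s.isLt
              have hs0 : (0 : ℝ) ≤ ((s : ℕ) : ℝ) := Nat.cast_nonneg _
              rw [abs_le]; constructor <;> linarith
          have h2 : |c (Sidx n)| ≤ 1 := by
            rw [hcS, abs_div, abs_of_nonneg (le_of_lt hNpos), div_le_one hNpos,
              abs_of_nonneg (by linarith)]
            exact hBn
          have h3 : |c (Tidx n)| = 0 := by rw [hcT, abs_zero]
          linarith [h1, h2, h3, key3]
      · -- case g : j = T, k = S
        have hk2 : (k : ℕ) = n := by omega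
        set c : Fin (n + 2) → ℝ := fun i =>
          if (i : ℕ) < n then (((i : ℕ) : ℝ) + 1) / (n : ℝ) else 0 with hc
        have hcj : c j = 0 := by simp only [hc]; rw [if_neg (by omega)]
        have hck : c k = 0 := by simp only [hc]; rw [if_neg (by omega)]
        have hcS : c (Sidx n) = 0 := by simp only [hc, Sidx_val]; rw [if_neg (by omega)]
        have hcT : c (Tidx n) = 0 := by simp only [hc, Tidx_val]; rw [if_neg (by omega)]
        have hce : ∀ s : Fin n, c (emb n s) = (((s : ℕ) : ℝ) + 1) / (n : ℝ) := by
          intro s; simp only [hc, emb_val]; rw [if_pos s.isLt]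
        clear_value c
        refine ⟨c, hcj, hck, mk_identity n c j ?_, ?_⟩
        · intro s
          unfold κ
          rw [if_neg hj, if_neg hj2, hcS, hcT, hce s]
          ring
        · rw [abs_sum_split]
          have h1 : ∑ s : Fin n, |c (emb n s)| ≤ (n : ℝ) * 1 := by
            apply coord_sum_le n
            intro s
            rw [hce s, abs_div, abs_of_nonneg (le_of_lt hNpos), div_le_one hNpos,
              abs_of_nonneg (by positivity)]
            exact_mod_cast s.isLt
          have h2 : |c (Sidx n)| = 0 := by rw [hcS, abs_zero]
          have h3 : |c (Tidx n)| = 0 := by rw [hcT, abs_zero]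
          linarith [h1, h2, h3, key5]

end CFAux

open CFAux

/-- For any two of the `n+2` functionals, each can be written as a linear combination of
the remaining `n` functionals with the sum of absolute values of coefficients at most `n²`;
consequently `max{|f_j(x)|, |f_k(x)|} ≤ n² · max_{i ∉ {j,k}} |fᵢ(x)|`. -/
theorem cornerFunctional_combination_bound
    (n : ℕ) (hn : 4 ≤ n) (j k : Fin (n + 2)) (hjk : j ≠ k) :
    ((∃ c : Fin (n + 2) → ℝ, c j = 0 ∧ c k = 0 ∧
        (∀ x, cornerFunctional n j x = ∑ i, c i * cornerFunctional n i x) ∧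
        ∑ i, |c i| ≤ (n : ℝ) ^ 2) ∧
     (∃ c : Fin (n + 2) → ℝ, c j = 0 ∧ c k = 0 ∧
        (∀ x, cornerFunctional n k x = ∑ i, c i * cornerFunctional n i x) ∧
        ∑ i, |c i| ≤ (n : ℝ) ^ 2)) ∧
    ∀ x : Fin n → ℝ,
      max |cornerFunctional n j x| |cornerFunctional n k x| ≤
        (n : ℝ) ^ 2 * ⨆ i : {i : Fin (n + 2) // i ≠ j ∧ i ≠ k}, |cornerFunctional n i.1 x| := by

  obtain ⟨c1, hc1j, hc1k, hid1, hsum1⟩ := exprA n hn j k hjk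
  obtain ⟨c2, hc2k, hc2j, hid2, hsum2⟩ := exprA n hn k j hjk.symm
  refine ⟨⟨⟨c1, hc1j, hc1k, hid1, hsum1⟩, ⟨c2, hc2j, hc2k, hid2, hsum2⟩⟩, ?_⟩
  intro x
  set M := ⨆ i : {i : Fin (n + 2) // i ≠ j ∧ i ≠ k}, |cornerFunctional n i.1 x| with hM
  have hbdd : BddAbove (Set.range fun i : {i : Fin (n + 2) // i ≠ j ∧ i ≠ k} =>
      |cornerFunctional n i.1 x|) := Set.Finite.bddAbove (Set.finite_range _)
  obtain ⟨i0, hi0⟩ : ∃ i : Fin (n + 2), i ≠ j ∧ i ≠ k := by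
    by_contra h
    push_neg at h
    have hall : ∀ m : Fin (n + 2), m = j ∨ m = k := fun m => by
      rcases eq_or_ne m j with h' | h'
      · exact Or.inl h'
      · exact Or.inr (h m h')
    have h0 := hall ⟨0, by omega⟩
    have h1 := hall ⟨1, by omega⟩
    have h2 := hall ⟨2, by omega⟩
    simp only [Fin.ext_iff] at h0 h1 h2
    omega
  have hM0 : 0 ≤ M :=
    le_trans (abs_nonneg (cornerFunctional n i0 x)) (le_ciSup hbdd ⟨i0, hi0⟩)
  have hle1 : ∀ i, c1 i ≠ 0 → |cornerFunctional n i x| ≤ M := by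
    intro i hi
    exact le_ciSup hbdd ⟨i, fun h => hi (h ▸ hc1j), fun h => hi (h ▸ hc1k)⟩
  have hle2 : ∀ i, c2 i ≠ 0 → |cornerFunctional n i x| ≤ M := by
    intro i hi
    exact le_ciSup hbdd ⟨i, fun h => hi (h ▸ hc2j), fun h => hi (h ▸ hc2k)⟩
  apply max_le
  · exact abs_le_mul_of_expr _ _ _ hM0 c1 _ hle1 hsum1 (hid1 x)
  · exact abs_le_mul_of_expr _ _ _ hM0 c2 _ hle2 hsum2 (hid2 x)
end
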